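/- arXiv:1111.0682 — 5 statements merged into one kernel-verified Lean document; each statement's English description precedes it below -/
import Mathlib

section
/- Let f(z) be a Laurent series in U((z)) for a vector space U, and g(w) ∈ c·w + w²·ℂ[[w]] with c ≠ 0. Then Res_z f(z) dz = Res_w f(g(w)) ∂_w g(w) dw, where Res denotes the coefficient of z^{-1} (resp. w^{-1}). -/
private lemma res_key
    (g : PowerSeries ℂ) (hg0 : PowerSeries.constantCoeff g = 0)
    (hg1 : PowerSeries.coeff 1 g ≠ 0) (n : ℤ) :
    (((g : LaurentSeries ℂ) ^ n *
      ((PowerSeries.derivative ℂ g : PowerSeries ℂ) : LaurentSeries ℂ)).coeff (-1))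
      = if n = -1 then 1 else 0 := by
  classical
  obtain ⟨u, hgu⟩ : (PowerSeries.X : PowerSeries ℂ) ∣ g := PowerSeries.X_dvd_iff.mpr hg0
  have hcu : PowerSeries.constantCoeff u = PowerSeries.coeff 1 g := by
    rw [hgu]
    simpa using (PowerSeries.coeff_succ_X_mul 0 u).symm
  have hu0 : PowerSeries.constantCoeff u ≠ 0 := hcu ▸ hg1
  obtain ⟨U, hU⟩ := PowerSeries.isUnit_iff_constantCoeff.mpr (IsUnit.mk0 _ hu0)
  set q : PowerSeries ℂ := ((U⁻¹ : (PowerSeries ℂ)ˣ) : PowerSeries ℂ) with hq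
  have hqu : q * u = 1 := by rw [hq, ← hU]; exact U.inv_mul
  set Du := PowerSeries.derivative ℂ u with hDu
  have hder : PowerSeries.derivative ℂ g = u + PowerSeries.X * Du := by
    rw [hgu, Derivation.leibniz, PowerSeries.derivative_X, smul_eq_mul, smul_eq_mul, mul_one,
      add_comm]
  -- rewrite the Laurent coefficient in terms of a power series coefficient
  have hzpow : (g : LaurentSeries ℂ) ^ n
      = HahnSeries.single n 1 * (((U ^ n : (PowerSeries ℂ)ˣ) : PowerSeries ℂ) : LaurentSeries ℂ) := by
    have hgL : (g : LaurentSeries ℂ)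
        = HahnSeries.single (1 : ℤ) 1 * ((u : PowerSeries ℂ) : LaurentSeries ℂ) := by
      rw [hgu, PowerSeries.coe_mul, PowerSeries.coe_X]
    rw [hgL, mul_zpow, ← RatFunc.single_zpow]
    congr 1
    have h1 : ((u : PowerSeries ℂ) : LaurentSeries ℂ)
        = ((Units.map (HahnSeries.ofPowerSeries ℤ ℂ).toMonoidHom U : (LaurentSeries ℂ)ˣ) :
            LaurentSeries ℂ) := by
      rw [Units.coe_map, ← hU]; rfl
    rw [h1, ← Units.val_zpow_eq_zpow_val, ← map_zpow, Units.coe_map]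
    rfl
  have hred : (((g : LaurentSeries ℂ) ^ n *
      ((PowerSeries.derivative ℂ g : PowerSeries ℂ) : LaurentSeries ℂ)).coeff (-1))
      = if (-1 : ℤ) - n < 0 then 0 else
          PowerSeries.coeff ((-1 - n).natAbs)
            (((U ^ n : (PowerSeries ℂ)ˣ) : PowerSeries ℂ) * PowerSeries.derivative ℂ g) := by
    rw [hzpow, mul_assoc, ← PowerSeries.coe_mul]
    have h2 := @HahnSeries.coeff_single_mul_add ℤ ℂ _ _ (r := (1 : ℂ))
      (x := ((((U ^ n : (PowerSeries ℂ)ˣ) : PowerSeries ℂ) * PowerSeries.derivative ℂ g :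
          PowerSeries ℂ) : LaurentSeries ℂ)) (a := -1 - n) (b := n)
    have h3 : (-1 : ℤ) - n + n = -1 := by ring
    rw [h3, one_mul] at h2
    rw [h2, PowerSeries.coeff_coe]
  rw [hred]
  rcases lt_trichotomy n (-1) with h | h | h
  · -- n < -1
    rw [if_neg (by omega), if_neg (by omega)]
    obtain ⟨m, rfl⟩ : ∃ m : ℕ, n = -(m + 2) := ⟨(-n - 2).toNat, by omega⟩
    have hna : ((-1 : ℤ) - -((m : ℤ) + 2)).natAbs = m + 1 := by omega
    rw [hna]
    have hUn : ((U ^ (-((m : ℤ) + 2)) : (PowerSeries ℂ)ˣ) : PowerSeries ℂ) = q ^ (m + 2) := by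
      have : -((m : ℤ) + 2) = -(((m + 2 : ℕ) : ℤ)) := by push_cast; ring
      rw [this, zpow_neg, zpow_natCast, ← inv_pow, hq, Units.val_pow_eq_pow_val]
    rw [hUn, hder]
    have hexp : q ^ (m + 2) * (u + PowerSeries.X * Du)
        = q ^ (m + 1) + PowerSeries.X * (q ^ (m + 2) * Du) := by
      linear_combination (q ^ (m + 1)) * hqu
    rw [hexp, map_add, PowerSeries.coeff_succ_X_mul]
    -- derivative argument
    have hDq : PowerSeries.derivative ℂ q = -(q ^ 2 * Du) := by
      have h1 : PowerSeries.derivative ℂ (q * u) = 0 := by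
        rw [hqu]; exact Derivation.map_one_eq_zero _
      rw [Derivation.leibniz, smul_eq_mul, smul_eq_mul] at h1
      linear_combination q * h1 - (PowerSeries.derivative ℂ q) * hqu
    have hd : PowerSeries.derivative ℂ (q ^ (m + 1))
        = -((((m : ℂ) + 1)) • (q ^ (m + 2) * Du)) := by
      rw [Derivation.leibniz_pow, hDq]
      simp only [smul_eq_mul, nsmul_eq_mul, Nat.add_sub_cancel, PowerSeries.smul_eq_C_mul,
        map_add, map_one, map_natCast]
      push_cast
      ring
    have h3 := congrArg (PowerSeries.coeff m) hd
    rw [PowerSeries.coeff_derivative, map_neg, map_smul, smul_eq_mul] at h3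
    have hne : ((m : ℂ) + 1) ≠ 0 := Nat.cast_add_one_ne_zero m
    have h4 : (PowerSeries.coeff (m + 1) (q ^ (m + 1))
        + PowerSeries.coeff m (q ^ (m + 2) * Du)) * ((m : ℂ) + 1) = 0 := by
      linear_combination h3
    exact (mul_eq_zero.mp h4).resolve_right hne
  · -- n = -1
    subst h
    rw [if_neg (by omega), if_pos rfl]
    have hna : ((-1 : ℤ) - (-1)).natAbs = 0 := rfl
    rw [hna]
    have hU1 : ((U ^ (-1 : ℤ) : (PowerSeries ℂ)ˣ) : PowerSeries ℂ) = q := by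
      rw [zpow_neg_one, hq]
    rw [hU1, hder]
    have hexp : q * (u + PowerSeries.X * Du) = 1 + PowerSeries.X * (q * Du) := by
      linear_combination hqu
    rw [hexp]
    simp
  · -- n > -1
    rw [if_pos (by omega), if_neg (by omega)]

/-- Formal change of variable for the formal residue: if `f(z) = ∑ₙ f n • zⁿ` is a Laurent
series with coefficients in a vector space `U` (finitely many negative powers), and
`g(w) ∈ c·w + w²ℂ⟦w⟧` with `c ≠ 0`, then
`Res_z f(z) dz = Res_w f(g(w)) ∂_w g(w) dw`.
Here the left-hand residue is `f (-1)` (the coefficient of `z⁻¹`), and the right-hand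
residue is computed coefficientwise: the contribution of `f n • zⁿ` is the coefficient
of `w⁻¹` in `g(w)ⁿ · g'(w)` times `f n`. -/
theorem formal_residue_change_of_variable
    (U : Type*) [AddCommGroup U] [Module ℂ U]
    (f : ℤ → U) (hf : ∃ N : ℤ, ∀ n < N, f n = 0)
    (g : PowerSeries ℂ) (hg0 : PowerSeries.constantCoeff g = 0)
    (hg1 : PowerSeries.coeff 1 g ≠ 0) :
    f (-1) = ∑ᶠ n : ℤ,
      (((g : LaurentSeries ℂ) ^ n *
        ((PowerSeries.derivative ℂ g : PowerSeries ℂ) : LaurentSeries ℂ)).coeff (-1)) • f n := by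
  rw [finsum_eq_single _ (-1 : ℤ) (fun n hn => by rw [res_key g hg0 hg1, if_neg hn, zero_smul]),
    res_key g hg0 hg1, if_pos rfl, one_smul]
end

section
/- Let A be a finite-dimensional simple superalgebra with irreducible module N, and h an automorphism of A. Then there exists an invertible ℂ-linear map ι : N → N such that h(a)·x = ι^{-1}·a·ι·x for all a ∈ A, x ∈ N. If A ≅ End(ℂ^{m|k}), then ι is ℤ/2ℤ-homogeneous and unique up to a nonzero scalar factor. -/
private def SuperSNTw (N : Type*) : Type _ := N

private instance {N : Type*} [AddCommGroup N] : AddCommGroup (SuperSNTw N) :=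
  ‹AddCommGroup N›

open LinearMap in
private lemma super_sn_embed {A : Type*} [Ring A] [IsSemisimpleRing A]
    {N : Type*} [AddCommGroup N] [Module A N]
    {k : ℕ} (v : Fin k → N) (hv : ∀ a : A, (∀ i, a • v i = 0) → a = 0)
    (S : Type*) [AddCommGroup S] [Module A S] [IsSimpleModule A S] :
    ∃ f : S →ₗ[A] N, Function.Injective f := by
  have : Nontrivial S := IsSimpleModule.nontrivial A S
  obtain ⟨s, hs⟩ := exists_ne (0 : S)
  let π : A →ₗ[A] S :=
    { toFun := fun a => a • s
      map_add' := fun a b => add_smul a b s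
      map_smul' := fun a b => mul_smul a b s }
  have hπs : Function.Surjective π := by
    have hr : LinearMap.range π = ⊤ := by
      rcases eq_bot_or_eq_top (LinearMap.range π) with hb | ht
      · exfalso
        apply hs
        have h1 : π 1 ∈ LinearMap.range π := ⟨1, rfl⟩
        rw [hb, Submodule.mem_bot] at h1
        simpa [π] using h1
      · exact ht
    exact LinearMap.range_eq_top.1 hr
  obtain ⟨T, hT⟩ := exists_isCompl (LinearMap.ker π)
  let πT : T →ₗ[A] S := π.comp T.subtype
  have hTinj : Function.Injective πT := by
    rw [← LinearMap.ker_eq_bot, eq_bot_iff]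
    rintro ⟨t, ht⟩ h0
    have h0' : t ∈ LinearMap.ker π := h0
    have hmem : t ∈ LinearMap.ker π ⊓ T := ⟨h0', ht⟩
    rw [hT.inf_eq_bot, Submodule.mem_bot] at hmem
    exact Submodule.mem_bot _ |>.mpr (Subtype.ext hmem)
  have hTsurj : Function.Surjective πT := by
    intro x
    obtain ⟨a, ha⟩ := hπs x
    obtain ⟨y, z, hy, hz, hyz⟩ := Submodule.codisjoint_iff_exists_add_eq.mp hT.codisjoint a
    refine ⟨⟨z, hz⟩, ?_⟩
    have hsum : π a = π y + π z := by rw [← hyz, map_add]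
    have hy0 : π y = 0 := hy
    simp only [πT, LinearMap.comp_apply, Submodule.subtype_apply]
    rw [← ha, hsum, hy0, zero_add]
  let e : T ≃ₗ[A] S := LinearEquiv.ofBijective πT ⟨hTinj, hTsurj⟩
  set t₀ : T := e.symm s with ht₀
  have ht₀0 : t₀ ≠ 0 := by
    intro hc
    apply hs
    have := congrArg e hc
    rw [LinearEquiv.apply_symm_apply, map_zero] at this
    exact this
  have ht₀0' : (t₀ : A) ≠ 0 := fun hc => ht₀0 (Subtype.ext hc)
  obtain ⟨i, hi⟩ : ∃ i, (t₀ : A) • v i ≠ 0 := by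
    by_contra hc
    push_neg at hc
    exact ht₀0' (hv _ hc)
  let μ : A →ₗ[A] N :=
    { toFun := fun a => a • v i
      map_add' := fun a b => add_smul a b (v i)
      map_smul' := fun a b => mul_smul a b (v i) }
  let f : S →ₗ[A] N := (μ.comp T.subtype).comp (e.symm : S →ₗ[A] T)
  have hf0 : f ≠ 0 := by
    intro hc
    apply hi
    have hz : f s = 0 := by rw [hc]; rfl
    simpa [f, μ, ht₀] using hz
  refine ⟨f, ?_⟩
  rw [← LinearMap.ker_eq_bot]
  rcases eq_bot_or_eq_top (LinearMap.ker f) with hb | ht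
  · exact hb
  · exfalso
    apply hf0
    ext x
    have hx : x ∈ LinearMap.ker f := by rw [ht]; trivial
    simpa using hx

/-- Super Skolem–Noether.  Let `A` be a finite-dimensional simple superalgebra over `ℂ`
(the `ℤ/2`-grading is encoded by the parity involution `σA`, and simplicity means every
graded, i.e. `σA`-invariant, two-sided ideal is trivial) acting irreducibly on a graded
module `N` (grading encoded by the involution `σN`), and let `h` be an (even) automorphism
of `A`.  Then there is an invertible linear map `ι : N → N` with `h(a)·x = ι⁻¹(a·ι(x))`
for all `a, x`.  Moreover, if `A` is of Type I, i.e. `A ≅ End(ℂ^{m|k})` — encoded here by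
the (equivalent) condition that the commutant of the `A`-action on `N` consists of scalars —
then `ι` is `ℤ/2`-homogeneous and unique up to a nonzero scalar factor. -/
theorem super_skolem_noether
    (A : Type*) [Ring A] [Algebra ℂ A] [FiniteDimensional ℂ A]
    (σA : A ≃ₐ[ℂ] A) (hσA2 : ∀ a, σA (σA a) = a)
    (hsimple : ∀ I : TwoSidedIdeal A, (∀ a ∈ I, σA a ∈ I) → I = ⊥ ∨ I = ⊤)
    (N : Type*) [AddCommGroup N] [Module ℂ N] [Module A N] [IsScalarTower ℂ A N]
    [Nontrivial N]
    (σN : N ≃ₗ[ℂ] N) (hσN2 : ∀ x, σN (σN x) = x)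
    (hcompat : ∀ (a : A) (x : N), σN (a • x) = σA a • σN x)
    (hirr : ∀ W : Submodule A N, (∀ x ∈ W, σN x ∈ W) → W = ⊥ ∨ W = ⊤)
    (h : A ≃ₐ[ℂ] A) (hEven : ∀ a, h (σA a) = σA (h a)) :
    ∃ ι : N ≃ₗ[ℂ] N,
      (∀ (a : A) (x : N), h a • x = ι.symm (a • ι x)) ∧
      ((∀ ψ : N →ₗ[ℂ] N, (∀ (a : A) (x : N), ψ (a • x) = a • ψ x) →
          ∃ c : ℂ, ψ = c • LinearMap.id) →
        ((∀ x, σN (ι x) = ι (σN x)) ∨ (∀ x, σN (ι x) = - ι (σN x))) ∧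
        ∀ ι' : N ≃ₗ[ℂ] N, (∀ (a : A) (x : N), h a • x = ι'.symm (a • ι' x)) →
          ∃ c : ℂ, c ≠ 0 ∧ ∀ x, ι' x = c • ι x) := by
  classical
  -- faithfulness
  have hfaith : ∀ a : A, (∀ x : N, a • x = 0) → a = 0 := by
    intro a ha
    let I : TwoSidedIdeal A := TwoSidedIdeal.mk' {b : A | ∀ x : N, b • x = 0}
      (fun x => zero_smul A x)
      (fun {x y} hx hy n => by rw [add_smul, hx, hy, add_zero])
      (fun {x} hx n => by rw [neg_smul, hx, neg_zero])
      (fun {x y} hy n => by rw [mul_smul, hy, smul_zero])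
      (fun {x y} hx n => by rw [mul_smul, hx])
    have hmem : ∀ b : A, b ∈ I ↔ ∀ x : N, b • x = 0 := fun b =>
      TwoSidedIdeal.mem_mk' _ _ _ _ _ _ b
    have hstabI : ∀ b ∈ I, σA b ∈ I := by
      intro b hb
      rw [hmem] at hb ⊢
      intro x
      have h1 : σN (b • σN x) = σA b • σN (σN x) := hcompat b (σN x)
      rw [hb, map_zero, hσN2] at h1
      exact h1.symm
    rcases hsimple I hstabI with hbot | htop
    · have : a ∈ I := (hmem a).mpr ha
      rw [hbot, TwoSidedIdeal.mem_bot] at this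
      exact this
    · exfalso
      have h1 : (1 : A) ∈ I := by rw [htop]; exact TwoSidedIdeal.mem_top _
      rw [hmem] at h1
      obtain ⟨x, hx⟩ := exists_ne (0 : N)
      exact hx (by simpa using h1 x)
  -- finite dimensionality of N
  obtain ⟨x₀, hx₀⟩ := exists_ne (0 : N)
  have hstabspan : ∀ y ∈ Submodule.span A ({x₀, σN x₀} : Set N),
      σN y ∈ Submodule.span A ({x₀, σN x₀} : Set N) := by
    intro y hy
    induction hy using Submodule.span_induction with
    | mem z hz =>
        rcases hz with rfl | hz
        · exact Submodule.subset_span (by right; rfl)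
        · rw [Set.mem_singleton_iff] at hz
          subst hz
          rw [hσN2]
          exact Submodule.subset_span (by left; rfl)
    | zero => rw [map_zero]; exact Submodule.zero_mem _
    | add u w _ _ hu hw => rw [map_add]; exact Submodule.add_mem _ hu hw
    | smul a u _ hu => rw [hcompat]; exact Submodule.smul_mem _ _ hu
  have hspan : Submodule.span A ({x₀, σN x₀} : Set N) = ⊤ := by
    rcases hirr _ hstabspan with hb | ht
    · exfalso
      apply hx₀
      have : x₀ ∈ Submodule.span A ({x₀, σN x₀} : Set N) :=
        Submodule.subset_span (by left; rfl)
      rw [hb, Submodule.mem_bot] at this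
      exact this
    · exact ht
  have hfinA : Module.Finite A N :=
    Module.finite_def.mpr (by rw [← hspan]; exact Submodule.fg_span (Set.toFinite _))
  have hfinC : Module.Finite ℂ N := Module.Finite.trans A N
  haveI : IsArtinian A N := isArtinian_of_tower ℂ inferInstance
  haveI : IsAtomic (Submodule A N) := isAtomic_of_orderBot_wellFounded_lt wellFounded_lt
  haveI : Nontrivial (Submodule A N) := by
    refine ⟨⊥, ⊤, fun hc => hx₀ ?_⟩
    have : x₀ ∈ (⊥ : Submodule A N) := by rw [hc]; trivial
    simpa using this
  obtain ⟨W, hW⟩ := IsAtomic.exists_atom (α := Submodule A N)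
  -- the sigma image of a submodule
  let sig : Submodule A N → Submodule A N := fun U =>
    { carrier := σN '' (U : Set N)
      add_mem' := by
        rintro x y ⟨u, hu, rfl⟩ ⟨w, hw, rfl⟩
        exact ⟨u + w, U.add_mem hu hw, map_add σN u w⟩
      zero_mem' := ⟨0, U.zero_mem, map_zero σN⟩
      smul_mem' := by
        rintro a x ⟨u, hu, rfl⟩
        exact ⟨σA a • u, U.smul_mem _ hu, by rw [hcompat, hσA2]⟩ }
  have mem_sig : ∀ (U : Submodule A N) (y : N), y ∈ sig U ↔ ∃ u ∈ U, σN u = y :=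
    fun U y => Iff.rfl
  have sig_sig : ∀ U, sig (sig U) = U := by
    intro U
    ext y
    constructor
    · rintro ⟨u, ⟨w, hw, rfl⟩, rfl⟩
      rw [hσN2]
      exact hw
    · intro hy
      exact ⟨σN y, ⟨y, hy, rfl⟩, hσN2 y⟩
  have sig_bot : sig ⊥ = ⊥ := by
    ext y
    simp only [mem_sig, Submodule.mem_bot]
    constructor
    · rintro ⟨u, rfl, rfl⟩
      exact map_zero σN
    · rintro rfl
      exact ⟨0, rfl, map_zero σN⟩
  have sig_mono : ∀ {U V : Submodule A N}, U ≤ V → sig U ≤ sig V := by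
    intro U V hUV y hy
    obtain ⟨u, hu, rfl⟩ := hy
    exact ⟨u, hUV hu, rfl⟩
  have sig_atom : ∀ U, IsAtom U → IsAtom (sig U) := by
    intro U hU
    constructor
    · intro hc
      apply hU.1
      have := congrArg sig hc
      rwa [sig_sig, sig_bot] at this
    · intro b hb
      have h1 : sig b ≤ U := by
        have := sig_mono hb.le
        rwa [sig_sig] at this
      have h2 : sig b ≠ U := by
        intro hc
        apply hb.ne
        have := congrArg sig hc
        rwa [sig_sig] at this
      have h3 := hU.2 _ (lt_of_le_of_ne h1 h2)
      have := congrArg sig h3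
      rwa [sig_sig, sig_bot] at this
  -- W ⊔ sig W = ⊤
  have hstabsup : ∀ y ∈ W ⊔ sig W, σN y ∈ W ⊔ sig W := by
    intro y hy
    rw [Submodule.mem_sup] at hy ⊢
    obtain ⟨u, hu, w, hw, rfl⟩ := hy
    refine ⟨σN w, ?_, σN u, ⟨u, hu, rfl⟩, ?_⟩
    · obtain ⟨z, hz, rfl⟩ := hw
      rw [hσN2]
      exact hz
    · rw [map_add, add_comm]
  have hsupWV : W ⊔ sig W = ⊤ := by
    rcases hirr (W ⊔ sig W) hstabsup with hb | ht
    · exfalso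
      apply hW.1
      rw [eq_bot_iff, ← hb]
      exact le_sup_left
    · exact ht
  haveI hssN : IsSemisimpleModule A N := by
    apply IsSemisimpleModule.of_sSup_simples_eq_top
    rw [eq_top_iff, ← hsupWV]
    exact sup_le
      (le_sSup (isSimpleModule_iff_isAtom.2 hW))
      (le_sSup (isSimpleModule_iff_isAtom.2 (sig_atom W hW)))
  -- a finite spanning family and faithfulness data
  obtain ⟨k, v, hv⟩ := Module.Finite.exists_fin (R := ℂ) (M := N)
  have hvfaith : ∀ a : A, (∀ i, a • v i = 0) → a = 0 := by
    intro a ha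
    apply hfaith
    intro x
    let K : Submodule ℂ N :=
      { carrier := {y : N | a • y = 0}
        zero_mem' := smul_zero a
        add_mem' := fun {y z} hy hz => by
          show a • (y + z) = 0
          rw [smul_add, hy, hz, add_zero]
        smul_mem' := fun c y hy => by
          show a • (c • y) = 0
          rw [← algebraMap_smul A c y, ← mul_smul, ← Algebra.commutes, mul_smul,
            algebraMap_smul, hy, smul_zero] }
    have hK : Submodule.span ℂ (Set.range v) ≤ K :=
      Submodule.span_le.2 (by rintro _ ⟨i, rfl⟩; exact ha i)
    rw [hv] at hK
    exact hK Submodule.mem_top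
  -- A is a semisimple ring
  haveI hssPi : IsSemisimpleModule A (Fin k → N) := by
    refine isSemisimpleModule_of_isSemisimpleModule_submodule'
      (p := fun i => LinearMap.range (LinearMap.single A (fun _ => N) i))
      (fun i => IsSemisimpleModule.range _) ?_
    rw [eq_top_iff]
    intro x _
    rw [← Finset.univ_sum_single x]
    exact Submodule.sum_mem _ fun i _ => Submodule.mem_iSup_of_mem i ⟨x i, rfl⟩
  let j : A →ₗ[A] (Fin k → N) := LinearMap.pi fun i =>
    { toFun := fun a => a • v i
      map_add' := fun a b => add_smul a b (v i)
      map_smul' := fun a b => mul_smul a b (v i) }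
  have hjinj : Function.Injective j := by
    rw [← LinearMap.ker_eq_bot, eq_bot_iff]
    intro a ha
    have ha' : j a = 0 := ha
    rw [Submodule.mem_bot]
    refine hvfaith a fun i => ?_
    exact congrFun ha' i
  haveI : IsSemisimpleRing A := IsSemisimpleModule.congr (LinearEquiv.ofInjective j hjinj)

  -- the twisted module
  letI : Module A (SuperSNTw N) := Module.compHom N h.toAlgHom.toRingHom
  have tw_smul : ∀ (a : A) (x : SuperSNTw N), a • x = h a • (show N from x) :=
    fun _ _ => rfl
  let toTw : Submodule A N → Submodule A (SuperSNTw N) := fun U =>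
    { carrier := (U : Set N)
      add_mem' := fun hx hy => U.add_mem hx hy
      zero_mem' := U.zero_mem
      smul_mem' := fun a x hx => U.smul_mem (h a) hx }
  let ofTw : Submodule A (SuperSNTw N) → Submodule A N := fun U =>
    { carrier := (U : Set (SuperSNTw N))
      add_mem' := fun hx hy => U.add_mem hx hy
      zero_mem' := U.zero_mem
      smul_mem' := fun a x hx => by
        have := U.smul_mem (h.symm a) hx
        have t : h (h.symm a) • x ∈ U := this
        rwa [AlgEquiv.apply_symm_apply] at t }
  have ofTw_toTw : ∀ U, ofTw (toTw U) = U := fun U => Submodule.ext fun x => Iff.rfl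
  have toTw_ofTw : ∀ U, toTw (ofTw U) = U := fun U => Submodule.ext fun x => Iff.rfl
  have toTw_bot : toTw ⊥ = ⊥ := by
    apply Submodule.ext
    intro x
    show x ∈ (⊥ : Submodule A N) ↔ x ∈ (⊥ : Submodule A (SuperSNTw N))
    simp [Submodule.mem_bot]
    exact Iff.rfl
  have ofTw_bot : ofTw ⊥ = ⊥ := by
    have := congrArg ofTw toTw_bot.symm
    rwa [ofTw_toTw] at this
  have toTw_atom : ∀ U, IsAtom U → IsAtom (toTw U) := by
    intro U hU
    constructor
    · intro hc
      apply hU.1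
      have := congrArg ofTw hc
      rwa [ofTw_toTw, ofTw_bot] at this
    · intro b hb
      have h1 : ofTw b ≤ U := by
        intro x hx
        exact hb.le hx
      have h2 : ofTw b ≠ U := by
        intro hc
        apply hb.ne
        have := congrArg toTw hc
        rwa [toTw_ofTw] at this
      have h3 := hU.2 _ (lt_of_le_of_ne h1 h2)
      have := congrArg toTw h3
      rwa [toTw_ofTw, toTw_bot] at this
  -- main existence statement
  have main : ∃ ι : N ≃ₗ[ℂ] N, ∀ (a : A) (x : N), ι (h a • x) = a • ι x := by
    by_cases hWtop : W = ⊤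
    · -- Case 1 : N is a simple module
      haveI hsN : IsSimpleModule A N := (isSimpleModule_iff A N).mpr (isSimpleOrder_iff_isAtom_top.mpr (hWtop ▸ hW))
      haveI hsTw : IsSimpleModule A (SuperSNTw N) := by
        rw [isSimpleModule_iff, isSimpleOrder_iff_isAtom_top]
        have h1 := toTw_atom W hW
        have h2 : toTw ⊤ = ⊤ := by
          apply Submodule.ext
          intro x
          exact ⟨fun _ => trivial, fun _ => trivial⟩
        rwa [hWtop, h2] at h1
      obtain ⟨f, hfinj⟩ := super_sn_embed v hvfaith (SuperSNTw N)
      have hfsurj : Function.Surjective f := by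
        rcases eq_bot_or_eq_top (LinearMap.range f) with hb | ht
        · exfalso
          apply hx₀
          have : f x₀ ∈ LinearMap.range f := ⟨x₀, rfl⟩
          rw [hb, Submodule.mem_bot] at this
          have h0 : f x₀ = f 0 := by rw [this, map_zero]
          exact hfinj h0
        · exact LinearMap.range_eq_top.1 ht
      have fsmul : ∀ (a : A) (x : N), f (h a • x) = a • f x := fun a x => f.map_smul a x
      let Φ : N →ₗ[ℂ] N :=
        { toFun := fun x => f x
          map_add' := fun x y => f.map_add x y
          map_smul' := fun c x => by
            show f ((c • x : N)) = c • f x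
            calc f ((c • x : N)) = f (h (algebraMap ℂ A c) • x) := by
                  rw [AlgEquiv.commutes, _root_.algebraMap_smul A c x]
              _ = algebraMap ℂ A c • f x := fsmul _ x
              _ = c • f x := _root_.algebraMap_smul A c (f x)
          }
      refine ⟨LinearEquiv.ofBijective Φ ⟨fun a b hab => hfinj hab, hfsurj⟩, ?_⟩
      intro a x
      show f (h a • x) = a • f x
      exact fsmul a x
    · -- Case 2 : N = W ⊕ σW with W simple
      have hWbot : W ≠ ⊥ := hW.1
      have memW_of_memV : ∀ y ∈ sig W, σN y ∈ W := by
        intro y hy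
        obtain ⟨u, hu, rfl⟩ := hy
        rw [hσN2]
        exact hu
      have memV_of_memW : ∀ y ∈ W, σN y ∈ sig W := fun y hy => ⟨y, hy, rfl⟩
      have hstabinf : ∀ y ∈ W ⊓ sig W, σN y ∈ W ⊓ sig W := fun y hy =>
        ⟨memW_of_memV y hy.2, memV_of_memW y hy.1⟩
      have hinfWV : W ⊓ sig W = ⊥ := by
        rcases hirr _ hstabinf with hb | ht
        · exact hb
        · exfalso
          apply hWtop
          rw [eq_top_iff, ← ht]
          exact inf_le_left
      have hcompl : IsCompl W (sig W) := ⟨disjoint_iff.2 hinfWV, codisjoint_iff.2 hsupWV⟩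
      haveI hsW : IsSimpleModule A ↥(toTw W) := isSimpleModule_iff_isAtom.mpr (toTw_atom W hW)
      obtain ⟨f, hfinj⟩ := super_sn_embed v hvfaith ↥(toTw W)
      have fsmul : ∀ (a : A) (w : N) (hw : w ∈ W),
          f ⟨h a • w, W.smul_mem (h a) hw⟩ = a • f ⟨w, hw⟩ :=
        fun a w hw => f.map_smul a ⟨w, hw⟩
      have fcongr : ∀ (w z : ↥(toTw W)), w.1 = z.1 → f w = f z :=
        fun w z hwz => congrArg f (Subtype.ext hwz)
      have gm1 : ∀ y : ↥(toTw (sig W)), σN y.1 ∈ W := fun y => memW_of_memV _ y.2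
      let g0 : ↥(toTw (sig W)) → N := fun y => σN (f ⟨σN y.1, gm1 y⟩)
      let g : ↥(toTw (sig W)) →ₗ[A] N :=
        { toFun := g0
          map_add' := fun y z => by
            have e1 : f ⟨σN (y + z : ↥(toTw (sig W))).1, gm1 (y + z)⟩ =
                f (⟨σN y.1, gm1 y⟩ + ⟨σN z.1, gm1 z⟩) := by
              apply fcongr
              show σN (y.1 + z.1) = σN y.1 + σN z.1
              exact map_add σN _ _
            show σN (f ⟨σN (y + z : ↥(toTw (sig W))).1, gm1 (y + z)⟩) =
              σN (f ⟨σN y.1, gm1 y⟩) + σN (f ⟨σN z.1, gm1 z⟩)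
            rw [e1, map_add f, map_add σN]
          map_smul' := fun a y => by
            have e1 : f ⟨σN (a • y : ↥(toTw (sig W))).1, gm1 (a • y)⟩ =
                f ⟨h (σA a) • σN y.1, W.smul_mem (h (σA a)) (gm1 y)⟩ := by
              apply fcongr
              rw [hEven a]
              exact hcompat (h a) y.1
            show σN (f ⟨σN (a • y : ↥(toTw (sig W))).1, gm1 (a • y)⟩) =
              a • σN (f ⟨σN y.1, gm1 y⟩)
            rw [e1, fsmul (σA a) (σN y.1) (gm1 y), hcompat, hσA2]
          }
      have ginj : Function.Injective g := by
        intro y z hyz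
        have h1 : f ⟨σN y.1, gm1 y⟩ = f ⟨σN z.1, gm1 z⟩ :=
          σN.injective hyz
        have h2 : σN y.1 = σN z.1 := congrArg Subtype.val (hfinj h1)
        exact Subtype.ext (σN.injective h2)
      have hrel1 : ∀ w : ↥(toTw W),
          σN (f w) = g ⟨σN w.1, memV_of_memW _ w.2⟩ := by
        intro w
        show σN (f w) = σN (f ⟨σN (σN w.1), _⟩)
        apply congrArg
        apply fcongr
        exact (hσN2 _).symm
      have hrel2 : ∀ y : ↥(toTw (sig W)),
          σN (g y) = f ⟨σN y.1, gm1 y⟩ := fun y => hσN2 _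
      set S₁ := LinearMap.range f with hS₁
      set S₂ := LinearMap.range g with hS₂
      have hstab12 : ∀ z ∈ S₁, σN z ∈ S₂ := by
        rintro _ ⟨w, rfl⟩
        rw [hrel1 w]
        exact ⟨_, rfl⟩
      have hstab21 : ∀ z ∈ S₂, σN z ∈ S₁ := by
        rintro _ ⟨y, rfl⟩
        rw [hrel2 y]
        exact ⟨_, rfl⟩
      have hS1bot : S₁ ≠ ⊥ := by
        obtain ⟨w, hwW, hw0⟩ := (Submodule.ne_bot_iff W).1 hWbot
        rw [Submodule.ne_bot_iff]
        refine ⟨f ⟨w, hwW⟩, ⟨_, rfl⟩, fun hc => hw0 ?_⟩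
        have : (⟨w, hwW⟩ : ↥(toTw W)) = 0 := hfinj (by rw [hc, map_zero])
        exact congrArg Subtype.val this
      have hS1top : S₁ ≠ ⊤ := by
        intro hc
        have hfsurj : Function.Surjective f := LinearMap.range_eq_top.1 hc
        haveI : IsSimpleModule A N :=
          IsSimpleModule.congr (LinearEquiv.ofBijective f ⟨hfinj, hfsurj⟩).symm
        rcases eq_bot_or_eq_top W with h1 | h2
        · exact hWbot h1
        · exact hWtop h2
      have hinf12 : S₁ ⊓ S₂ = ⊥ := by
        have hstab : ∀ z ∈ S₁ ⊓ S₂, σN z ∈ S₁ ⊓ S₂ := fun z hz =>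
          ⟨hstab21 z hz.2, hstab12 z hz.1⟩
        rcases hirr _ hstab with hb | ht
        · exact hb
        · exfalso
          apply hS1top
          rw [eq_top_iff, ← ht]
          exact inf_le_left
      have hsup12 : S₁ ⊔ S₂ = ⊤ := by
        have hstab : ∀ z ∈ S₁ ⊔ S₂, σN z ∈ S₁ ⊔ S₂ := by
          intro z hz
          rw [Submodule.mem_sup] at hz ⊢
          obtain ⟨u, hu, w, hw, rfl⟩ := hz
          refine ⟨σN w, hstab21 w hw, σN u, hstab12 u hu, ?_⟩
          rw [map_add, add_comm]
        rcases hirr _ hstab with hb | ht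
        · exfalso
          apply hS1bot
          rw [eq_bot_iff, ← hb]
          exact le_sup_left
        · exact ht
      -- assemble the equivalence
      let P := Submodule.prodEquivOfIsCompl W (sig W) hcompl
      let liftW : ↥W → ↥(toTw W) := fun w => ⟨(w : N), w.2⟩
      let liftV : ↥(sig W) → ↥(toTw (sig W)) := fun w => ⟨(w : N), w.2⟩
      have lw : ∀ (a : A) (w : ↥W), liftW (h a • w) = a • liftW w :=
        fun a w => Subtype.ext rfl
      have lv : ∀ (a : A) (w : ↥(sig W)), liftV (h a • w) = a • liftV w :=
        fun a w => Subtype.ext rfl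
      have lwadd : ∀ w z : ↥W, liftW (w + z) = liftW w + liftW z :=
        fun _ _ => Subtype.ext rfl
      have lvadd : ∀ w z : ↥(sig W), liftV (w + z) = liftV w + liftV z :=
        fun _ _ => Subtype.ext rfl
      have lwc : ∀ (c : ℂ) (w : ↥W),
          liftW (algebraMap ℂ A c • w) = algebraMap ℂ A c • liftW w := by
        intro c w
        have e1 : algebraMap ℂ A c • w = h (algebraMap ℂ A c) • w := by
          apply Subtype.ext
          show algebraMap ℂ A c • (w : N) = h (algebraMap ℂ A c) • (w : N)
          rw [AlgEquiv.commutes]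
        rw [e1, lw]
      have lvc : ∀ (c : ℂ) (w : ↥(sig W)),
          liftV (algebraMap ℂ A c • w) = algebraMap ℂ A c • liftV w := by
        intro c w
        have e1 : algebraMap ℂ A c • w = h (algebraMap ℂ A c) • w := by
          apply Subtype.ext
          show algebraMap ℂ A c • (w : N) = h (algebraMap ℂ A c) • (w : N)
          rw [AlgEquiv.commutes]
        rw [e1, lv]
      let Φ0 : N → N := fun x => f (liftW (P.symm x).1) + g (liftV (P.symm x).2)
      let Φ : N →ₗ[ℂ] N :=
        { toFun := Φ0
          map_add' := fun x y => by
            show f (liftW (P.symm (x + y)).1) + g (liftV (P.symm (x + y)).2) =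
              (f (liftW (P.symm x).1) + g (liftV (P.symm x).2)) +
              (f (liftW (P.symm y).1) + g (liftV (P.symm y).2))
            rw [map_add P.symm, Prod.fst_add, Prod.snd_add, lwadd, lvadd,
              map_add f, map_add g]
            abel
          map_smul' := fun c x => by
            show f (liftW (P.symm (c • x)).1) + g (liftV (P.symm (c • x)).2) =
              c • (f (liftW (P.symm x).1) + g (liftV (P.symm x).2))
            have e0 : P.symm (c • x) = algebraMap ℂ A c • P.symm x := by
              rw [← _root_.algebraMap_smul A c x, map_smul]
            rw [e0, Prod.smul_fst, Prod.smul_snd, lwc, lvc, map_smul f, map_smul g,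
              _root_.algebraMap_smul A c, _root_.algebraMap_smul A c, smul_add]
          }
      have hinj0 : ∀ x : N, Φ x = 0 → x = 0 := by
        intro x hx0
        have h1 : f (liftW (P.symm x).1) = - g (liftV (P.symm x).2) := by
          have := hx0
          rwa [show Φ x = f (liftW (P.symm x).1) + g (liftV (P.symm x).2) from rfl,
            add_eq_zero_iff_eq_neg] at this
        have h2 : f (liftW (P.symm x).1) ∈ S₁ ⊓ S₂ := by
          refine ⟨⟨_, rfl⟩, ?_⟩
          rw [h1]
          exact Submodule.neg_mem _ ⟨_, rfl⟩
        rw [hinf12, Submodule.mem_bot] at h2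
        have hw0 : liftW (P.symm x).1 = 0 := hfinj (by rw [h2, map_zero])
        have h3 : g (liftV (P.symm x).2) = 0 := by
          rw [← neg_eq_zero, ← h1, h2]
        have hy0 : liftV (P.symm x).2 = 0 := ginj (by rw [h3, map_zero])
        have e1 : (P.symm x).1 = 0 :=
          Subtype.ext (congrArg Subtype.val hw0)
        have e2 : (P.symm x).2 = 0 :=
          Subtype.ext (congrArg Subtype.val hy0)
        have e3 : P.symm x = 0 := Prod.ext e1 e2
        have := congrArg P e3
        rwa [LinearEquiv.apply_symm_apply, map_zero] at this
      have hinj : Function.Injective Φ := by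
        intro x y hxy
        have : Φ (x - y) = 0 := by rw [map_sub, hxy, sub_self]
        have := hinj0 _ this
        exact sub_eq_zero.1 this
      have hsurj : Function.Surjective Φ := by
        intro z
        have hz : z ∈ S₁ ⊔ S₂ := by rw [hsup12]; trivial
        rw [Submodule.mem_sup] at hz
        obtain ⟨u, ⟨w1, rfl⟩, v1, ⟨y1, rfl⟩, rfl⟩ := hz
        refine ⟨P (⟨w1.1, w1.2⟩, ⟨y1.1, y1.2⟩), ?_⟩
        show f (liftW (P.symm (P _)).1) + g (liftV (P.symm (P _)).2) = f w1 + g y1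
        rw [LinearEquiv.symm_apply_apply]
      refine ⟨LinearEquiv.ofBijective Φ ⟨hinj, hsurj⟩, ?_⟩
      intro a x
      show f (liftW (P.symm (h a • x)).1) + g (liftV (P.symm (h a • x)).2) =
        a • (f (liftW (P.symm x).1) + g (liftV (P.symm x).2))
      have e0 : P.symm (h a • x) = h a • P.symm x := map_smul P.symm (h a) x
      rw [e0, Prod.smul_fst, Prod.smul_snd, lw, lv, map_smul f, map_smul g, smul_add]
  obtain ⟨ι, hι⟩ := main
  have hbase : ∀ (a : A) (x : N), h a • x = ι.symm (a • ι x) := by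
    intro a x
    rw [← hι a x, LinearEquiv.symm_apply_apply]
  refine ⟨ι, hbase, ?_⟩
  intro hcomm
  -- any two intertwiners differ by a nonzero scalar
  have uniq : ∀ ι' : N ≃ₗ[ℂ] N, (∀ (a : A) (x : N), ι' (h a • x) = a • ι' x) →
      ∃ c : ℂ, c ≠ 0 ∧ ∀ x, ι' x = c • ι x := by
    intro ι' hι'
    let ψ : N →ₗ[ℂ] N := (ι' : N →ₗ[ℂ] N).comp (ι.symm : N →ₗ[ℂ] N)
    have hψ : ∀ (a : A) (y : N), ψ (a • y) = a • ψ y := by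
      intro a y
      show ι' (ι.symm (a • y)) = a • ι' (ι.symm y)
      have h1 : a • y = ι (h a • ι.symm y) := by
        rw [hι, LinearEquiv.apply_symm_apply]
      rw [h1, LinearEquiv.symm_apply_apply, hι']
    obtain ⟨c, hc⟩ := hcomm ψ hψ
    have hc' : ∀ y : N, ι' (ι.symm y) = c • y := by
      intro y
      have := congrArg (fun φ : N →ₗ[ℂ] N => φ y) hc
      simpa [ψ] using this
    have hcne : c ≠ 0 := by
      intro h0
      obtain ⟨z, hz⟩ := exists_ne (0 : N)
      have h1 := hc' (ι z)
      rw [LinearEquiv.symm_apply_apply, h0, zero_smul] at h1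
      apply hz
      have := congrArg ι'.symm h1
      rwa [LinearEquiv.symm_apply_apply, map_zero] at this
    refine ⟨c, hcne, fun x => ?_⟩
    have := hc' (ι x)
    rwa [LinearEquiv.symm_apply_apply] at this
  constructor
  · -- homogeneity of ι
    let ι'' : N ≃ₗ[ℂ] N := (σN.trans ι).trans σN
    have hι'' : ∀ (a : A) (x : N), ι'' (h a • x) = a • ι'' x := by
      intro a x
      show σN (ι (σN (h a • x))) = a • σN (ι (σN x))
      rw [hcompat (h a) x, ← hEven a, hι (σA a) (σN x), hcompat (σA a), hσA2]
    obtain ⟨c, hcne, hc⟩ := uniq ι'' hι''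
    have hci : ∀ y : N, σN (ι y) = c • ι (σN y) := by
      intro y
      have := hc (σN y)
      show σN (ι y) = c • ι (σN y)
      calc σN (ι y) = σN (ι (σN (σN y))) := by rw [hσN2]
        _ = ι'' (σN y) := rfl
        _ = c • ι (σN y) := this
    have hc2 : c * c = 1 := by
      obtain ⟨z, hz⟩ := exists_ne (0 : N)
      have h1 : ι z = (c * c) • ι z := by
        calc ι z = σN (σN (ι z)) := (hσN2 _).symm
          _ = σN (c • ι (σN z)) := by rw [hci z]
          _ = c • σN (ι (σN z)) := map_smul σN c _
          _ = c • (c • ι (σN (σN z))) := by rw [hci (σN z)]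
          _ = (c * c) • ι z := by rw [hσN2 z, mul_smul]
      have hιz : ι z ≠ 0 := by
        intro hc0
        apply hz
        have := congrArg ι.symm hc0
        rwa [LinearEquiv.symm_apply_apply, map_zero] at this
      have h2 : ((c * c) - 1) • ι z = 0 := by
        rw [sub_smul, one_smul, ← h1, sub_self]
      rcases smul_eq_zero.1 h2 with h3 | h3
      · have := sub_eq_zero.1 h3
        exact this
      · exact absurd h3 hιz
    rcases mul_self_eq_one_iff.1 hc2 with h1 | h1
    · left
      intro x
      rw [hci x, h1, one_smul]
    · right
      intro x
      rw [hci x, h1, neg_smul, one_smul]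
  · intro ι' hι'p
    refine uniq ι' fun a x => ?_
    rw [hι'p a x, LinearEquiv.apply_symm_apply]
end

section
/- Let A be a finite-dimensional simple superalgebra of Type I (A ≅ End(ℂ^{m|k})) with irreducible module N, h an automorphism of A of finite order, and γ : N → N a homogeneous invertible linear map with h(a) = γ^{-1} a γ on N. Then the space of h-supersymmetric functions on A is one dimensional, spanned by a ↦ str_N(a γ σ_N^{p(γ)}), where σ_N is the parity involution of N. -/
/-- The superspace `ℂ^{m|k}`. -/
abbrev SV (m k : ℕ) := (Fin m → ℂ) × (Fin k → ℂ)

/-- An operator on `ℂ^{m|k}` is homogeneous of parity `p` (`false` even, `true` odd). -/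
def IsHomogeneousOp (m k : ℕ) (X : SV m k →ₗ[ℂ] SV m k) (p : Bool) : Prop :=
  if p then
    (LinearMap.fst ℂ _ _ ∘ₗ X ∘ₗ LinearMap.inl ℂ (Fin m → ℂ) (Fin k → ℂ) = 0 ∧
     LinearMap.snd ℂ _ _ ∘ₗ X ∘ₗ LinearMap.inr ℂ (Fin m → ℂ) (Fin k → ℂ) = 0)
  else
    (LinearMap.snd ℂ _ _ ∘ₗ X ∘ₗ LinearMap.inl ℂ (Fin m → ℂ) (Fin k → ℂ) = 0 ∧
     LinearMap.fst ℂ _ _ ∘ₗ X ∘ₗ LinearMap.inr ℂ (Fin m → ℂ) (Fin k → ℂ) = 0)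

/-- The supertrace on `End(ℂ^{m|k})`. -/
noncomputable def supertraceOp (m k : ℕ) (Z : SV m k →ₗ[ℂ] SV m k) : ℂ :=
  LinearMap.trace ℂ (Fin m → ℂ)
      (LinearMap.fst ℂ _ _ ∘ₗ Z ∘ₗ LinearMap.inl ℂ (Fin m → ℂ) (Fin k → ℂ)) -
  LinearMap.trace ℂ (Fin k → ℂ)
      (LinearMap.snd ℂ _ _ ∘ₗ Z ∘ₗ LinearMap.inr ℂ (Fin m → ℂ) (Fin k → ℂ))

/-- The parity involution `σ_N` of `ℂ^{m|k}`. -/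
noncomputable def sigmaN (m k : ℕ) : SV m k →ₗ[ℂ] SV m k :=
  LinearMap.prodMap LinearMap.id (-LinearMap.id)

/-- The automorphism `h(a) = γ⁻¹ a γ` of `End(ℂ^{m|k})` induced by `γ`. -/
noncomputable def hConj (m k : ℕ) (γ : SV m k ≃ₗ[ℂ] SV m k) (a : SV m k →ₗ[ℂ] SV m k) :
    SV m k →ₗ[ℂ] SV m k :=
  γ.symm.toLinearMap ∘ₗ a ∘ₗ γ.toLinearMap

/-- `f` is `h`-supersymmetric: for homogeneous `h`-eigenvectors `a, b` with eigenvalues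
`λ(a), λ(b)`, `f(ab) = δ_{λ(a)λ(b),1} (-1)^{p(a)p(b)} λ(a)⁻¹ f(ba)`. -/
def IsHSupersymmetric (m k : ℕ) (γ : SV m k ≃ₗ[ℂ] SV m k)
    (f : (SV m k →ₗ[ℂ] SV m k) → ℂ) : Prop :=
  ∀ (a b : SV m k →ₗ[ℂ] SV m k) (pa pb : Bool) (la lb : ℂ),
    IsHomogeneousOp m k a pa → IsHomogeneousOp m k b pb →
    hConj m k γ a = la • a → hConj m k γ b = lb • b →
    f (a ∘ₗ b) = (if la * lb = 1 then 1 else 0) *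
      (if pa && pb then (-1 : ℂ) else 1) * la⁻¹ * f (b ∘ₗ a)

namespace HSupAux

open LinearMap

variable {m k : ℕ}

@[simp] lemma sigmaN_apply (v : SV m k) : sigmaN m k v = (v.1, -v.2) := rfl

lemma sigma_sigma : sigmaN m k ∘ₗ sigmaN m k = LinearMap.id := by
  refine LinearMap.ext fun v => ?_
  simp [Prod.ext_iff]

/-- block definitions -/
noncomputable def b00 (z : SV m k →ₗ[ℂ] SV m k) : (Fin m → ℂ) →ₗ[ℂ] (Fin m → ℂ) :=
  LinearMap.fst ℂ _ _ ∘ₗ z ∘ₗ LinearMap.inl ℂ (Fin m → ℂ) (Fin k → ℂ)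
noncomputable def b01 (z : SV m k →ₗ[ℂ] SV m k) : (Fin k → ℂ) →ₗ[ℂ] (Fin m → ℂ) :=
  LinearMap.fst ℂ _ _ ∘ₗ z ∘ₗ LinearMap.inr ℂ (Fin m → ℂ) (Fin k → ℂ)
noncomputable def b10 (z : SV m k →ₗ[ℂ] SV m k) : (Fin m → ℂ) →ₗ[ℂ] (Fin k → ℂ) :=
  LinearMap.snd ℂ _ _ ∘ₗ z ∘ₗ LinearMap.inl ℂ (Fin m → ℂ) (Fin k → ℂ)
noncomputable def b11 (z : SV m k →ₗ[ℂ] SV m k) : (Fin k → ℂ) →ₗ[ℂ] (Fin k → ℂ) :=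
  LinearMap.snd ℂ _ _ ∘ₗ z ∘ₗ LinearMap.inr ℂ (Fin m → ℂ) (Fin k → ℂ)

lemma hom_false_iff (z : SV m k →ₗ[ℂ] SV m k) :
    IsHomogeneousOp m k z false ↔ b10 z = 0 ∧ b01 z = 0 := Iff.rfl

lemma hom_true_iff (z : SV m k →ₗ[ℂ] SV m k) :
    IsHomogeneousOp m k z true ↔ b00 z = 0 ∧ b11 z = 0 := Iff.rfl

lemma apply_eq (z : SV m k →ₗ[ℂ] SV m k) (v : SV m k) :
    z v = (b00 z v.1 + b01 z v.2, b10 z v.1 + b11 z v.2) := by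
  have h : v = ((v.1, 0) : SV m k) + (0, v.2) := by simp
  conv_lhs => rw [h, map_add]
  rfl

lemma fst_z (z : SV m k →ₗ[ℂ] SV m k) (v : SV m k) :
    (z v).1 = b00 z v.1 + b01 z v.2 := by rw [apply_eq]

lemma snd_z (z : SV m k →ₗ[ℂ] SV m k) (v : SV m k) :
    (z v).2 = b10 z v.1 + b11 z v.2 := by rw [apply_eq]

lemma b00_comp (u v : SV m k →ₗ[ℂ] SV m k) :
    b00 (u ∘ₗ v) = b00 u ∘ₗ b00 v + b01 u ∘ₗ b10 v := by
  refine LinearMap.ext fun x => ?_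
  show (u (v ((x, 0) : SV m k))).1 = _
  simp [fst_z, snd_z]

lemma b01_comp (u v : SV m k →ₗ[ℂ] SV m k) :
    b01 (u ∘ₗ v) = b00 u ∘ₗ b01 v + b01 u ∘ₗ b11 v := by
  refine LinearMap.ext fun x => ?_
  show (u (v ((0, x) : SV m k))).1 = _
  simp [fst_z, snd_z]

lemma b10_comp (u v : SV m k →ₗ[ℂ] SV m k) :
    b10 (u ∘ₗ v) = b10 u ∘ₗ b00 v + b11 u ∘ₗ b10 v := by
  refine LinearMap.ext fun x => ?_
  show (u (v ((x, 0) : SV m k))).2 = _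
  simp [fst_z, snd_z]

lemma b11_comp (u v : SV m k →ₗ[ℂ] SV m k) :
    b11 (u ∘ₗ v) = b10 u ∘ₗ b01 v + b11 u ∘ₗ b11 v := by
  refine LinearMap.ext fun x => ?_
  show (u (v ((0, x) : SV m k))).2 = _
  simp [fst_z, snd_z]

@[simp] lemma b00_sigma : b00 (sigmaN m k) = LinearMap.id := rfl
@[simp] lemma b01_sigma : b01 (sigmaN m k) = 0 := by
  refine LinearMap.ext fun x => ?_; show (sigmaN m k ((0, x) : SV m k)).1 = 0; simp
@[simp] lemma b10_sigma : b10 (sigmaN m k) = 0 := by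
  refine LinearMap.ext fun x => ?_; show (sigmaN m k ((x, 0) : SV m k)).2 = 0; simp
@[simp] lemma b11_sigma : b11 (sigmaN m k) = -LinearMap.id := rfl

@[simp] lemma b00_id : b00 (LinearMap.id : SV m k →ₗ[ℂ] SV m k) = LinearMap.id := rfl
@[simp] lemma b01_id : b01 (LinearMap.id : SV m k →ₗ[ℂ] SV m k) = 0 := rfl
@[simp] lemma b10_id : b10 (LinearMap.id : SV m k →ₗ[ℂ] SV m k) = 0 := rfl
@[simp] lemma b11_id : b11 (LinearMap.id : SV m k →ₗ[ℂ] SV m k) = LinearMap.id := rfl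

@[simp] lemma b00_smul (c : ℂ) (u : SV m k →ₗ[ℂ] SV m k) : b00 (c • u) = c • b00 u := rfl
@[simp] lemma b01_smul (c : ℂ) (u : SV m k →ₗ[ℂ] SV m k) : b01 (c • u) = c • b01 u := rfl
@[simp] lemma b10_smul (c : ℂ) (u : SV m k →ₗ[ℂ] SV m k) : b10 (c • u) = c • b10 u := rfl
@[simp] lemma b11_smul (c : ℂ) (u : SV m k →ₗ[ℂ] SV m k) : b11 (c • u) = c • b11 u := rfl

@[simp] lemma b00_add (u v : SV m k →ₗ[ℂ] SV m k) : b00 (u + v) = b00 u + b00 v := rfl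
@[simp] lemma b01_add (u v : SV m k →ₗ[ℂ] SV m k) : b01 (u + v) = b01 u + b01 v := rfl
@[simp] lemma b10_add (u v : SV m k →ₗ[ℂ] SV m k) : b10 (u + v) = b10 u + b10 v := rfl
@[simp] lemma b11_add (u v : SV m k →ₗ[ℂ] SV m k) : b11 (u + v) = b11 u + b11 v := rfl

@[simp] lemma b00_neg (u : SV m k →ₗ[ℂ] SV m k) : b00 (-u) = -(b00 u) := rfl
@[simp] lemma b01_neg (u : SV m k →ₗ[ℂ] SV m k) : b01 (-u) = -(b01 u) := rfl
@[simp] lemma b10_neg (u : SV m k →ₗ[ℂ] SV m k) : b10 (-u) = -(b10 u) := rfl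
@[simp] lemma b11_neg (u : SV m k →ₗ[ℂ] SV m k) : b11 (-u) = -(b11 u) := rfl

lemma ext_blocks {u v : SV m k →ₗ[ℂ] SV m k} (h00 : b00 u = b00 v)
    (h01 : b01 u = b01 v) (h10 : b10 u = b10 v) (h11 : b11 u = b11 v) : u = v :=
  LinearMap.ext fun x => by rw [apply_eq, apply_eq, h00, h01, h10, h11]

/-- sign of a parity -/
def sgn (p : Bool) : ℂ := if p then -1 else 1

@[simp] lemma sgn_false : sgn false = 1 := rfl
@[simp] lemma sgn_true : sgn true = -1 := rfl

@[simp] lemma neg_one_smul_lm {M N : Type*} [AddCommGroup M] [Module ℂ M] [AddCommGroup N]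
    [Module ℂ N] (f : M →ₗ[ℂ] N) : (-1 : ℂ) • f = -f := LinearMap.ext fun x => by simp

lemma sgn_ne_zero (p : Bool) : sgn p ≠ 0 := by cases p <;> simp [sgn]

lemma hom_comp {u v : SV m k →ₗ[ℂ] SV m k} {pu pv : Bool}
    (hu : IsHomogeneousOp m k u pu) (hv : IsHomogeneousOp m k v pv) :
    IsHomogeneousOp m k (u ∘ₗ v) (xor pu pv) := by
  cases pu <;> cases pv
  · show IsHomogeneousOp m k (u ∘ₗ v) false
    rw [hom_false_iff] at hu hv ⊢
    rw [b10_comp, b01_comp, hu.1, hu.2, hv.1, hv.2]; simp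
  · rw [hom_false_iff] at hu
    rw [hom_true_iff] at hv
    rw [show xor false true = true from rfl, hom_true_iff]
    rw [b00_comp, b11_comp, hu.1, hu.2, hv.1, hv.2]; simp
  · rw [hom_true_iff] at hu
    rw [hom_false_iff] at hv
    rw [show xor true false = true from rfl, hom_true_iff]
    rw [b00_comp, b11_comp, hu.1, hu.2, hv.1, hv.2]; simp
  · rw [hom_true_iff] at hu hv
    rw [show xor true true = false from rfl, hom_false_iff]
    rw [b10_comp, b01_comp, hu.1, hu.2, hv.1, hv.2]; simp

lemma hom_zero (p : Bool) : IsHomogeneousOp m k 0 p := by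
  cases p <;> exact ⟨by ext v; simp [b00,b01,b10,b11], by ext v; simp [b00,b01,b10,b11]⟩

lemma hom_id : IsHomogeneousOp m k LinearMap.id false := ⟨rfl, rfl⟩

lemma hom_sigma : IsHomogeneousOp m k (sigmaN m k) false := by
  rw [hom_false_iff]; exact ⟨b10_sigma, b01_sigma⟩

lemma hom_smul {u : SV m k →ₗ[ℂ] SV m k} {p : Bool} (c : ℂ)
    (hu : IsHomogeneousOp m k u p) : IsHomogeneousOp m k (c • u) p := by
  cases p
  · rw [hom_false_iff] at hu ⊢
    rw [b10_smul, b01_smul, hu.1, hu.2]; simp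
  · rw [hom_true_iff] at hu ⊢
    rw [b00_smul, b11_smul, hu.1, hu.2]; simp

lemma hom_add {u v : SV m k →ₗ[ℂ] SV m k} {p : Bool}
    (hu : IsHomogeneousOp m k u p) (hv : IsHomogeneousOp m k v p) :
    IsHomogeneousOp m k (u + v) p := by
  cases p
  · rw [hom_false_iff] at hu hv ⊢
    rw [b10_add, b01_add, hu.1, hu.2, hv.1, hv.2]; simp
  · rw [hom_true_iff] at hu hv ⊢
    rw [b00_add, b11_add, hu.1, hu.2, hv.1, hv.2]; simp

lemma hom_sum {ι : Type*} (s : Finset ι) (g : ι → (SV m k →ₗ[ℂ] SV m k)) {p : Bool}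
    (hg : ∀ i ∈ s, IsHomogeneousOp m k (g i) p) :
    IsHomogeneousOp m k (∑ i ∈ s, g i) p := by
  classical
  induction s using Finset.induction_on with
  | empty => simpa using hom_zero p
  | insert _ _ hnot ih =>
    rw [Finset.sum_insert hnot]
    exact hom_add (hg _ (by simp)) (ih fun i hi => hg i (by simp [hi]))

lemma sigma_conj_of_hom {u : SV m k →ₗ[ℂ] SV m k} {p : Bool}
    (hu : IsHomogeneousOp m k u p) :
    sigmaN m k ∘ₗ u ∘ₗ sigmaN m k = sgn p • u := by
  cases p
  · rw [hom_false_iff] at hu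
    refine ext_blocks ?_ ?_ ?_ ?_ <;>
      simp [b00_comp, b01_comp, b10_comp, b11_comp, hu.1, hu.2]
  · rw [hom_true_iff] at hu
    refine ext_blocks ?_ ?_ ?_ ?_ <;>
      simp [b00_comp, b01_comp, b10_comp, b11_comp, hu.1, hu.2, neg_one_smul_lm]

lemma halve {M : Type*} [AddCommGroup M] [Module ℂ M] {X : M} (h : -X = X) : X = 0 := by
  have h2 : (2 : ℂ) • X = 0 := by rw [two_smul]; nth_rewrite 1 [← h]; simp
  calc X = (2 : ℂ)⁻¹ • ((2 : ℂ) • X) := by rw [smul_smul]; norm_num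
  _ = 0 := by rw [h2, smul_zero]

lemma b00_conj (u : SV m k →ₗ[ℂ] SV m k) :
    b00 (sigmaN m k ∘ₗ u ∘ₗ sigmaN m k) = b00 u := by
  simp [b00_comp, b01_comp, b10_comp, b11_comp]

lemma b01_conj (u : SV m k →ₗ[ℂ] SV m k) :
    b01 (sigmaN m k ∘ₗ u ∘ₗ sigmaN m k) = -(b01 u) := by
  simp [b00_comp, b01_comp, b10_comp, b11_comp]

lemma b10_conj (u : SV m k →ₗ[ℂ] SV m k) :
    b10 (sigmaN m k ∘ₗ u ∘ₗ sigmaN m k) = -(b10 u) := by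
  simp [b00_comp, b01_comp, b10_comp, b11_comp]

lemma b11_conj (u : SV m k →ₗ[ℂ] SV m k) :
    b11 (sigmaN m k ∘ₗ u ∘ₗ sigmaN m k) = b11 u := by
  simp [b00_comp, b01_comp, b10_comp, b11_comp]

lemma hom_of_sigma_conj {u : SV m k →ₗ[ℂ] SV m k} {p : Bool}
    (h : sigmaN m k ∘ₗ u ∘ₗ sigmaN m k = sgn p • u) : IsHomogeneousOp m k u p := by
  cases p
  · rw [hom_false_iff]
    constructor
    · have h10 := congrArg b10 h
      rw [b10_conj, b10_smul, sgn_false, one_smul] at h10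
      exact halve h10
    · have h01 := congrArg b01 h
      rw [b01_conj, b01_smul, sgn_false, one_smul] at h01
      exact halve h01
  · rw [hom_true_iff]
    constructor
    · have h00 := congrArg b00 h
      rw [b00_conj, b00_smul, sgn_true, neg_one_smul_lm] at h00
      exact halve h00.symm
    · have h11 := congrArg b11 h
      rw [b11_conj, b11_smul, sgn_true, neg_one_smul_lm] at h11
      exact halve h11.symm

lemma sigma_sigma_apply (v : SV m k) : sigmaN m k (sigmaN m k v) = v := by simp

lemma sigma_comp_hom {u : SV m k →ₗ[ℂ] SV m k} {p : Bool} (hu : IsHomogeneousOp m k u p) :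
    sigmaN m k ∘ₗ u = sgn p • (u ∘ₗ sigmaN m k) := by
  have h2 := congrArg (fun w => w ∘ₗ sigmaN m k) (sigma_conj_of_hom hu)
  simpa [LinearMap.comp_assoc, sigma_sigma, LinearMap.smul_comp] using h2

lemma comp_sigma_hom {u : SV m k →ₗ[ℂ] SV m k} {p : Bool} (hu : IsHomogeneousOp m k u p) :
    u ∘ₗ sigmaN m k = sgn p • (sigmaN m k ∘ₗ u) := by
  rw [sigma_comp_hom hu, smul_smul]
  cases p <;> simp

lemma hom_symm (γ : SV m k ≃ₗ[ℂ] SV m k) {p : Bool}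
    (h : IsHomogeneousOp m k γ.toLinearMap p) :
    IsHomogeneousOp m k γ.symm.toLinearMap p := by
  apply hom_of_sigma_conj
  have hc := sigma_conj_of_hom h
  refine LinearMap.ext fun w => ?_
  have h1 := LinearMap.ext_iff.mp hc (γ.symm (sigmaN m k w))
  simp only [LinearMap.comp_apply, LinearMap.smul_apply, LinearEquiv.coe_coe,
    LinearEquiv.apply_symm_apply] at h1
  have h2 := congrArg (sigmaN m k) h1
  rw [sigma_sigma_apply] at h2
  simp only [map_smul, sigma_sigma_apply] at h2
  have h3 := congrArg γ.symm h2
  rw [LinearEquiv.symm_apply_apply] at h3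
  simp only [map_smul] at h3
  simpa [LinearMap.comp_apply, LinearMap.smul_apply] using h3

section Gamma

variable (γ : SV m k ≃ₗ[ℂ] SV m k)

lemma eig_right {a : SV m k →ₗ[ℂ] SV m k} {l : ℂ} (h : hConj m k γ a = l • a) :
    a ∘ₗ γ.toLinearMap = l • (γ.toLinearMap ∘ₗ a) := by
  refine LinearMap.ext fun v => ?_
  have h1 := LinearMap.ext_iff.mp h v
  simp only [hConj, LinearMap.comp_apply, LinearMap.smul_apply, LinearEquiv.coe_coe] at h1 ⊢
  have h2 := congrArg γ h1
  rw [LinearEquiv.apply_symm_apply] at h2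
  simpa [map_smul] using h2

lemma eig_left {a : SV m k →ₗ[ℂ] SV m k} {l : ℂ} (h : hConj m k γ a = l • a) :
    γ.symm.toLinearMap ∘ₗ a = l • (a ∘ₗ γ.symm.toLinearMap) := by
  refine LinearMap.ext fun v => ?_
  have h1 := LinearMap.ext_iff.mp h (γ.symm v)
  simp only [hConj, LinearMap.comp_apply, LinearMap.smul_apply, LinearEquiv.coe_coe,
    LinearEquiv.apply_symm_apply] at h1 ⊢
  exact h1

lemma eig_nonzero {a : SV m k →ₗ[ℂ] SV m k} {l : ℂ} (h : hConj m k γ a = l • a)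
    (ha : a ≠ 0) : l ≠ 0 := by
  intro hl
  subst hl
  apply ha
  refine LinearMap.ext fun w => ?_
  have h1 := LinearMap.ext_iff.mp h (γ.symm w)
  simp only [hConj, LinearMap.comp_apply, LinearMap.smul_apply, LinearEquiv.coe_coe,
    LinearEquiv.apply_symm_apply, zero_smul, LinearMap.zero_apply] at h1 ⊢
  have h2 := congrArg γ h1
  rw [LinearEquiv.apply_symm_apply] at h2
  simpa using h2

end Gamma

/-! ### supertrace lemmas -/

lemma str_def (z : SV m k →ₗ[ℂ] SV m k) :
    supertraceOp m k z = LinearMap.trace ℂ _ (b00 z) - LinearMap.trace ℂ _ (b11 z) := rfl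

lemma str_add (u v : SV m k →ₗ[ℂ] SV m k) :
    supertraceOp m k (u + v) = supertraceOp m k u + supertraceOp m k v := by
  simp only [str_def, b00_add, b11_add, map_add]; ring

lemma str_smul (c : ℂ) (u : SV m k →ₗ[ℂ] SV m k) :
    supertraceOp m k (c • u) = c * supertraceOp m k u := by
  simp only [str_def, b00_smul, b11_smul, map_smul, smul_eq_mul]; ring

lemma str_zero : supertraceOp m k 0 = 0 := by
  have := str_smul (m := m) (k := k) 0 0
  simpa using this

lemma str_comp4 (u v : SV m k →ₗ[ℂ] SV m k) :
    supertraceOp m k (u ∘ₗ v) =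
      LinearMap.trace ℂ _ (b00 u ∘ₗ b00 v) + LinearMap.trace ℂ _ (b01 u ∘ₗ b10 v)
      - LinearMap.trace ℂ _ (b10 u ∘ₗ b01 v) - LinearMap.trace ℂ _ (b11 u ∘ₗ b11 v) := by
  rw [str_def, b00_comp, b11_comp, map_add, map_add]; ring

lemma str_odd {z : SV m k →ₗ[ℂ] SV m k} (hz : IsHomogeneousOp m k z true) :
    supertraceOp m k z = 0 := by
  rw [hom_true_iff] at hz
  rw [str_def, hz.1, hz.2]
  simp

lemma str_supercomm {u v : SV m k →ₗ[ℂ] SV m k} {pu pv : Bool}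
    (hu : IsHomogeneousOp m k u pu) (hv : IsHomogeneousOp m k v pv) :
    supertraceOp m k (u ∘ₗ v) = sgn (pu && pv) * supertraceOp m k (v ∘ₗ u) := by
  cases pu
  · rw [hom_false_iff] at hu
    cases pv
    · rw [hom_false_iff] at hv
      rw [str_comp4, str_comp4, hu.1, hu.2, hv.1, hv.2]
      rw [LinearMap.trace_comp_comm' (b00 v) (b00 u), LinearMap.trace_comp_comm' (b11 v) (b11 u)]
      simp [sgn]
      try ring
    · rw [hom_true_iff] at hv
      rw [str_comp4, str_comp4, hu.1, hu.2, hv.1, hv.2]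
      simp
  · rw [hom_true_iff] at hu
    cases pv
    · rw [hom_false_iff] at hv
      rw [str_comp4, str_comp4, hu.1, hu.2, hv.1, hv.2]
      simp
    · rw [hom_true_iff] at hv
      rw [str_comp4, str_comp4, hu.1, hu.2, hv.1, hv.2]
      rw [LinearMap.trace_comp_comm' (b10 v) (b01 u), LinearMap.trace_comp_comm' (b01 v) (b10 u)]
      simp [sgn]
      try ring

/-! ### the operator `σ^{pγ}` and pointwise commutation -/

noncomputable def sO (m k : ℕ) (p : Bool) : SV m k →ₗ[ℂ] SV m k :=
  if p then sigmaN m k else LinearMap.id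

lemma hom_sO {p : Bool} : IsHomogeneousOp m k (sO m k p) false := by
  cases p <;> simp [sO, hom_id, hom_sigma]

lemma pw_ss {p : Bool} (v : SV m k) : sO m k p (sO m k p v) = v := by
  cases p <;> simp [sO]

section Gamma2

variable {γ : SV m k ≃ₗ[ℂ] SV m k} {pγ : Bool}

lemma pw_s_hom {u : SV m k →ₗ[ℂ] SV m k} {pu : Bool} (hu : IsHomogeneousOp m k u pu)
    (v : SV m k) : sO m k pγ (u v) = sgn (pu && pγ) • u (sO m k pγ v) := by
  cases pγ
  · simp [sO]
  · have h := LinearMap.ext_iff.mp (sigma_comp_hom hu) v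
    simp only [LinearMap.comp_apply, LinearMap.smul_apply] at h
    simpa [sO] using h

lemma pw_gamma_eig {a : SV m k →ₗ[ℂ] SV m k} {la : ℂ} (h : hConj m k γ a = la • a)
    (hla : la ≠ 0) (v : SV m k) : γ (a v) = la⁻¹ • a (γ v) := by
  have h1 := LinearMap.ext_iff.mp (eig_right γ h) v
  simp only [LinearMap.comp_apply, LinearMap.smul_apply, LinearEquiv.coe_coe] at h1
  rw [h1, smul_smul, inv_mul_cancel₀ hla, one_smul]

lemma pw_symm_eig {a : SV m k →ₗ[ℂ] SV m k} {la : ℂ} (h : hConj m k γ a = la • a)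
    (v : SV m k) : γ.symm (a v) = la • a (γ.symm v) := by
  have h1 := LinearMap.ext_iff.mp (eig_left γ h) v
  simpa only [LinearMap.comp_apply, LinearMap.smul_apply, LinearEquiv.coe_coe] using h1

lemma pw_s_gamma (hγ : IsHomogeneousOp m k γ.toLinearMap pγ) (v : SV m k) :
    sO m k pγ (γ v) = sgn pγ • γ (sO m k pγ v) := by
  have := pw_s_hom (pγ := pγ) hγ v
  simpa using this

lemma pw_symm_gamma (v : SV m k) : γ.symm (γ v) = v := LinearEquiv.symm_apply_apply γ v
lemma pw_gamma_symm (v : SV m k) : γ (γ.symm v) = v := LinearEquiv.apply_symm_apply γ v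

/-- strF: the candidate supersymmetric function -/
noncomputable def strF (γ : SV m k ≃ₗ[ℂ] SV m k) (pγ : Bool)
    (a : SV m k →ₗ[ℂ] SV m k) : ℂ :=
  supertraceOp m k (a ∘ₗ γ.toLinearMap ∘ₗ sO m k pγ)

lemma str_vanish (hγ : IsHomogeneousOp m k γ.toLinearMap pγ)
    {z : SV m k →ₗ[ℂ] SV m k} {pz : Bool} {lz : ℂ}
    (hz : IsHomogeneousOp m k z pz) (he : hConj m k γ z = lz • z)
    (hlz : lz ≠ sgn pγ) : supertraceOp m k z = 0 := by
  cases pz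
  · have h1 : supertraceOp m k (hConj m k γ z) = lz * supertraceOp m k z := by
      rw [he, str_smul]
    have h2 : supertraceOp m k (hConj m k γ z) = sgn pγ * supertraceOp m k z := by
      show supertraceOp m k (γ.symm.toLinearMap ∘ₗ z ∘ₗ γ.toLinearMap) = _
      rw [str_supercomm (hom_symm γ hγ) (hom_comp hz hγ)]
      have h3 : (z ∘ₗ γ.toLinearMap) ∘ₗ γ.symm.toLinearMap = z := by
        refine LinearMap.ext fun v => ?_
        simp [pw_gamma_symm]
      rw [h3]
      cases pγ <;> simp [sgn]
    have h4 : (lz - sgn pγ) * supertraceOp m k z = 0 := by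
      rw [sub_mul, ← h1, ← h2, sub_self]
    rcases mul_eq_zero.mp h4 with h | h
    · exact absurd (sub_eq_zero.mp h) hlz
    · exact h
  · exact str_odd hz

lemma part2 (hγ : IsHomogeneousOp m k γ.toLinearMap pγ) :
    IsHSupersymmetric m k γ (strF γ pγ) := by
  intro a b pa pb la lb ha hb hea heb
  by_cases haz : a = 0
  · subst haz
    simp [strF, str_zero]
  by_cases hbz : b = 0
  · subst hbz
    simp [strF, str_zero]
  have hla := eig_nonzero γ hea haz
  have hlb := eig_nonzero γ heb hbz
  have MI : strF γ pγ (a ∘ₗ b) = sgn (pa && pb) * la⁻¹ * strF γ pγ (b ∘ₗ a) := by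
    unfold strF
    have h1 : (a ∘ₗ b) ∘ₗ γ.toLinearMap ∘ₗ sO m k pγ
        = a ∘ₗ (b ∘ₗ γ.toLinearMap ∘ₗ sO m k pγ) := by
      rw [LinearMap.comp_assoc]
    rw [h1, str_supercomm ha (hom_comp hb (hom_comp hγ hom_sO))]
    have h2 : (b ∘ₗ γ.toLinearMap ∘ₗ sO m k pγ) ∘ₗ a
        = (sgn (pa && pγ) * la⁻¹) • ((b ∘ₗ a) ∘ₗ γ.toLinearMap ∘ₗ sO m k pγ) := by
      refine LinearMap.ext fun v => ?_
      simp only [LinearMap.comp_apply, LinearMap.smul_apply, LinearEquiv.coe_coe]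
      rw [pw_s_hom (pγ := pγ) ha v, map_smul, map_smul, pw_gamma_eig hea hla, map_smul,
        smul_smul]
    rw [h2, str_smul]
    cases pa <;> cases pb <;> cases pγ <;> norm_num [sgn] <;> ring
  by_cases hll : la * lb = 1
  · rw [MI, if_pos hll]
    cases pa <;> cases pb <;> simp [sgn] <;> ring
  · rw [if_neg hll]
    have heig : hConj m k γ ((a ∘ₗ b) ∘ₗ γ.toLinearMap ∘ₗ sO m k pγ)
        = (sgn pγ * (la * lb)) • ((a ∘ₗ b) ∘ₗ γ.toLinearMap ∘ₗ sO m k pγ) := by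
      refine LinearMap.ext fun v => ?_
      simp only [hConj, LinearMap.comp_apply, LinearMap.smul_apply, LinearEquiv.coe_coe]
      rw [pw_s_gamma hγ v]
      simp only [map_smul]
      rw [pw_symm_eig hea, pw_symm_eig heb, pw_symm_gamma]
      simp only [map_smul, smul_smul]
      try (congr 1; ring)
    have hz0 : supertraceOp m k ((a ∘ₗ b) ∘ₗ γ.toLinearMap ∘ₗ sO m k pγ) = 0 := by
      refine str_vanish hγ (hom_comp (hom_comp ha hb) (hom_comp hγ hom_sO)) heig ?_
      intro hcon
      exact hll (mul_left_cancel₀ (sgn_ne_zero pγ) (by rw [mul_one]; exact hcon))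
    show supertraceOp m k ((a ∘ₗ b) ∘ₗ γ.toLinearMap ∘ₗ sO m k pγ) = _
    rw [hz0]
    ring

end Gamma2

/-! ### matrix units -/

noncomputable def incl (m k : ℕ) : (Fin m ⊕ Fin k) → (ℂ →ₗ[ℂ] SV m k)
  | .inl i => LinearMap.inl ℂ _ _ ∘ₗ LinearMap.single ℂ (fun _ => ℂ) i
  | .inr j => LinearMap.inr ℂ _ _ ∘ₗ LinearMap.single ℂ (fun _ => ℂ) j

noncomputable def prj (m k : ℕ) : (Fin m ⊕ Fin k) → (SV m k →ₗ[ℂ] ℂ)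
  | .inl i => LinearMap.proj i ∘ₗ LinearMap.fst ℂ _ _
  | .inr j => LinearMap.proj j ∘ₗ LinearMap.snd ℂ _ _

noncomputable def Eu (m k : ℕ) (x y : Fin m ⊕ Fin k) : SV m k →ₗ[ℂ] SV m k :=
  incl m k x ∘ₗ prj m k y

def par : Fin m ⊕ Fin k → Bool := Sum.elim (fun _ => false) (fun _ => true)

@[simp] lemma par_inl (i : Fin m) : par (Sum.inl i : Fin m ⊕ Fin k) = false := rfl
@[simp] lemma par_inr (j : Fin k) : par (Sum.inr j : Fin m ⊕ Fin k) = true := rfl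

lemma prj_incl_same (x : Fin m ⊕ Fin k) : prj m k x ∘ₗ incl m k x = LinearMap.id := by
  cases x <;> refine LinearMap.ext fun c => ?_ <;>
    simp [incl, prj, LinearMap.single_apply]

lemma prj_incl_ne {x y : Fin m ⊕ Fin k} (h : x ≠ y) : prj m k x ∘ₗ incl m k y = 0 := by
  cases x <;> cases y <;> refine LinearMap.ext fun c => ?_ <;>
    simp [incl, prj, LinearMap.single_apply]
  · rw [Pi.single_eq_of_ne]
    intro hc
    exact h (by simp [hc])
  · rw [Pi.single_eq_of_ne]
    intro hc
    exact h (by simp [hc])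

lemma Eu_comp_same (x y z : Fin m ⊕ Fin k) :
    Eu m k x y ∘ₗ Eu m k y z = Eu m k x z := by
  unfold Eu
  rw [LinearMap.comp_assoc, ← LinearMap.comp_assoc (prj m k z) (incl m k y) (prj m k y),
    prj_incl_same]
  rfl

lemma Eu_comp_ne {y y' : Fin m ⊕ Fin k} (h : y ≠ y') (x z : Fin m ⊕ Fin k) :
    Eu m k x y ∘ₗ Eu m k y' z = 0 := by
  unfold Eu
  rw [LinearMap.comp_assoc, ← LinearMap.comp_assoc (prj m k z) (incl m k y') (prj m k y),
    prj_incl_ne h]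
  refine LinearMap.ext fun v => ?_
  simp

lemma hom_Eu (x y : Fin m ⊕ Fin k) :
    IsHomogeneousOp m k (Eu m k x y) (xor (par x) (par y)) := by
  cases x <;> cases y <;>
    exact ⟨LinearMap.ext fun w => by simp [Eu, incl, prj],
           LinearMap.ext fun w => by simp [Eu, incl, prj]⟩

lemma str_Eu_diag (x : Fin m ⊕ Fin k) :
    supertraceOp m k (Eu m k x x) = sgn (par x) := by
  cases x with
  | inl i =>
    have h1 : b00 (Eu m k (.inl i) (.inl i)) =
        LinearMap.single ℂ (fun _ => ℂ) i ∘ₗ LinearMap.proj i := by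
      refine LinearMap.ext fun w => ?_
      simp [b00, Eu, incl, prj]
    have h2 : b11 (Eu m k (.inl i) (.inl i)) = 0 := by
      refine LinearMap.ext fun w => ?_
      simp [b11, Eu, incl, prj]
    rw [str_def, h1, h2, LinearMap.trace_comp_comm' (LinearMap.proj i)
      (LinearMap.single ℂ (fun _ => ℂ) i), map_zero, LinearMap.proj_comp_single_same]
    simp [LinearMap.trace_id]
  | inr j =>
    have h1 : b11 (Eu m k (.inr j) (.inr j)) =
        LinearMap.single ℂ (fun _ => ℂ) j ∘ₗ LinearMap.proj j := by
      refine LinearMap.ext fun w => ?_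
      simp [b11, Eu, incl, prj]
    have h2 : b00 (Eu m k (.inr j) (.inr j)) = 0 := by
      refine LinearMap.ext fun w => ?_
      simp [b00, Eu, incl, prj]
    rw [str_def, h1, h2, LinearMap.trace_comp_comm' (LinearMap.proj j)
      (LinearMap.single ℂ (fun _ => ℂ) j), map_zero, LinearMap.proj_comp_single_same]
    simp [LinearMap.trace_id]

lemma str_Eu_off {x y : Fin m ⊕ Fin k} (h : x ≠ y) :
    supertraceOp m k (Eu m k x y) = 0 := by
  cases x with
  | inl i =>
    cases y with
    | inl j =>
      have hij : j ≠ i := fun hij => h (by rw [hij])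
      have h1 : b00 (Eu m k (.inl i) (.inl j)) =
          LinearMap.single ℂ (fun _ => ℂ) i ∘ₗ LinearMap.proj j := by
        refine LinearMap.ext fun w => ?_
        simp [b00, Eu, incl, prj]
      have h2 : b11 (Eu m k (.inl i) (.inl j)) = 0 := by
        refine LinearMap.ext fun w => ?_
        simp [b11, Eu, incl, prj]
      rw [str_def, h1, h2, LinearMap.trace_comp_comm' (LinearMap.proj j)
        (LinearMap.single ℂ (fun _ => ℂ) i), map_zero,
        LinearMap.proj_comp_single_ne ℂ (fun _ => ℂ) j i hij]
      simp
    | inr j =>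
      have h1 : b00 (Eu m k (.inl i) (.inr j)) = 0 := by
        refine LinearMap.ext fun w => ?_
        simp [b00, Eu, incl, prj]
      have h2 : b11 (Eu m k (.inl i) (.inr j)) = 0 := by
        refine LinearMap.ext fun w => ?_
        simp [b11, Eu, incl, prj]
      rw [str_def, h1, h2]
      simp
  | inr i =>
    cases y with
    | inl j =>
      have h1 : b00 (Eu m k (.inr i) (.inl j)) = 0 := by
        refine LinearMap.ext fun w => ?_
        simp [b00, Eu, incl, prj]
      have h2 : b11 (Eu m k (.inr i) (.inl j)) = 0 := by
        refine LinearMap.ext fun w => ?_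
        simp [b11, Eu, incl, prj]
      rw [str_def, h1, h2]
      simp
    | inr j =>
      have hij : j ≠ i := fun hij => h (by rw [hij])
      have h1 : b11 (Eu m k (.inr i) (.inr j)) =
          LinearMap.single ℂ (fun _ => ℂ) i ∘ₗ LinearMap.proj j := by
        refine LinearMap.ext fun w => ?_
        simp [b11, Eu, incl, prj]
      have h2 : b00 (Eu m k (.inr i) (.inr j)) = 0 := by
        refine LinearMap.ext fun w => ?_
        simp [b00, Eu, incl, prj]
      rw [str_def, h1, h2, LinearMap.trace_comp_comm' (LinearMap.proj j)
        (LinearMap.single ℂ (fun _ => ℂ) i), map_zero,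
        LinearMap.proj_comp_single_ne ℂ (fun _ => ℂ) j i hij]
      simp

lemma RI (w : SV m k) : ∑ x : Fin m ⊕ Fin k, incl m k x (prj m k x w) = w := by
  rw [Fintype.sum_sum_type]
  refine Prod.ext ?_ ?_ <;>
    simp [Prod.fst_sum, Prod.snd_sum, incl, prj, LinearMap.single_apply,
      Finset.univ_sum_single]

lemma incl_scalar (x : Fin m ⊕ Fin k) (t : ℂ) :
    incl m k x t = t • incl m k x 1 := by
  rw [← map_smul]
  simp

lemma expand (z : SV m k →ₗ[ℂ] SV m k) :
    z = ∑ p : (Fin m ⊕ Fin k) × (Fin m ⊕ Fin k),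
      (prj m k p.1 (z (incl m k p.2 1))) • Eu m k p.1 p.2 := by
  refine LinearMap.ext fun v => ?_
  rw [LinearMap.sum_apply, Fintype.sum_prod_type_right]
  have hstep : ∀ y : Fin m ⊕ Fin k,
      (∑ x : Fin m ⊕ Fin k, ((prj m k x (z (incl m k y 1))) • Eu m k x y) v)
        = z (incl m k y (prj m k y v)) := by
    intro y
    have hterm : ∀ x : Fin m ⊕ Fin k, ((prj m k x (z (incl m k y 1))) • Eu m k x y) v
        = incl m k x (prj m k x ((prj m k y v) • z (incl m k y 1))) := by
      intro x
      simp only [LinearMap.smul_apply, Eu, LinearMap.comp_apply, map_smul]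
      rw [incl_scalar x (prj m k y v), incl_scalar x (prj m k x (z (incl m k y 1)))]
      simp only [map_smul, smul_smul, smul_eq_mul]
      ring_nf
    rw [Finset.sum_congr rfl fun x _ => hterm x, RI,
      incl_scalar y (prj m k y v), map_smul]
  rw [Finset.sum_congr rfl fun y _ => hstep y, ← map_sum, RI]

lemma mem_span_Eu (z : SV m k →ₗ[ℂ] SV m k) :
    z ∈ Submodule.span ℂ (Set.range fun p : (Fin m ⊕ Fin k) × (Fin m ⊕ Fin k) =>
      Eu m k p.1 p.2) := by
  rw [expand z]
  exact Submodule.sum_mem _ fun p _ => Submodule.smul_mem _ _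
    (Submodule.subset_span (Set.mem_range_self p))

/-! ### part 1 witness -/

section Part1

variable {γ : SV m k ≃ₗ[ℂ] SV m k} {pγ : Bool}

lemma witness_eval (hγ : IsHomogeneousOp m k γ.toLinearMap pγ) (x : Fin m ⊕ Fin k) :
    strF γ pγ (Eu m k x x ∘ₗ sO m k pγ ∘ₗ γ.symm.toLinearMap) = sgn (par x) := by
  unfold strF
  have hcomp : (Eu m k x x ∘ₗ sO m k pγ ∘ₗ γ.symm.toLinearMap) ∘ₗ γ.toLinearMap ∘ₗ sO m k pγ
      = Eu m k x x := by
    refine LinearMap.ext fun v => ?_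
    simp only [LinearMap.comp_apply, LinearEquiv.coe_coe]
    rw [pw_symm_gamma, pw_ss]
  rw [hcomp, str_Eu_diag]

lemma part1 (hγ : IsHomogeneousOp m k γ.toLinearMap pγ) (hmk : 0 < m + k) :
    ∃ a : SV m k →ₗ[ℂ] SV m k, strF γ pγ a ≠ 0 := by
  have hx : Nonempty (Fin m ⊕ Fin k) := by
    by_cases hm : 0 < m
    · exact ⟨Sum.inl ⟨0, hm⟩⟩
    · exact ⟨Sum.inr ⟨0, by omega⟩⟩
  obtain ⟨x⟩ := hx
  refine ⟨Eu m k x x ∘ₗ sO m k pγ ∘ₗ γ.symm.toLinearMap, ?_⟩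
  rw [witness_eval hγ]
  exact sgn_ne_zero _

end Part1

/-! ### eigen decomposition -/

section Decomp

variable {γ : SV m k ≃ₗ[ℂ] SV m k} {pγ : Bool}

lemma hconj_smul (t : ℂ) (a : SV m k →ₗ[ℂ] SV m k) :
    hConj m k γ (t • a) = t • hConj m k γ a := by
  refine LinearMap.ext fun v => ?_
  simp [hConj]

lemma hconj_sum {ι : Type*} (s : Finset ι) (g : ι → (SV m k →ₗ[ℂ] SV m k)) :
    hConj m k γ (∑ i ∈ s, g i) = ∑ i ∈ s, hConj m k γ (g i) := by
  refine LinearMap.ext fun v => ?_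
  simp [hConj, LinearMap.sum_apply]

lemma hconj_hom (hγ : IsHomogeneousOp m k γ.toLinearMap pγ)
    {a : SV m k →ₗ[ℂ] SV m k} {p : Bool} (ha : IsHomogeneousOp m k a p) :
    IsHomogeneousOp m k (hConj m k γ a) p := by
  have h := hom_comp (hom_symm γ hγ) (hom_comp ha hγ)
  have hb : (pγ ^^ (p ^^ pγ)) = p := by cases pγ <;> cases p <;> rfl
  rw [hb] at h
  exact h

lemma hconj_iter_hom (hγ : IsHomogeneousOp m k γ.toLinearMap pγ) (i : ℕ)
    {z : SV m k →ₗ[ℂ] SV m k} {pz : Bool} (hz : IsHomogeneousOp m k z pz) :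
    IsHomogeneousOp m k ((hConj m k γ)^[i] z) pz := by
  induction i with
  | zero => simpa using hz
  | succ i ih =>
    rw [Function.iterate_succ_apply']
    exact hconj_hom hγ ih

lemma pow_succ_apply (i : ℕ) (v : SV m k) : (γ ^ (i + 1)) v = (γ ^ i) (γ v) := by
  rw [LinearEquiv.pow_apply, LinearEquiv.pow_apply, Function.iterate_succ_apply]

lemma pow_succ_symm_apply (i : ℕ) (u : SV m k) :
    (γ ^ (i + 1)).symm u = γ.symm ((γ ^ i).symm u) := by
  apply (γ ^ (i + 1)).injective
  rw [LinearEquiv.apply_symm_apply, pow_succ_apply, LinearEquiv.apply_symm_apply,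
    LinearEquiv.apply_symm_apply]

lemma hconj_iterate (i : ℕ) (a : SV m k →ₗ[ℂ] SV m k) :
    (hConj m k γ)^[i] a = (γ ^ i).symm.toLinearMap ∘ₗ a ∘ₗ (γ ^ i).toLinearMap := by
  induction i with
  | zero =>
    refine LinearMap.ext fun v => ?_
    rw [Function.iterate_zero_apply]
    simp only [pow_zero, LinearMap.comp_apply, LinearEquiv.coe_coe]
    rfl
  | succ i ih =>
    rw [Function.iterate_succ_apply', ih]
    refine LinearMap.ext fun v => ?_
    simp only [hConj, LinearMap.comp_apply, LinearEquiv.coe_coe]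
    rw [pow_succ_apply, ← pow_succ_symm_apply]

section N

variable {n : ℕ} {c : ℂ}

lemma gamma_pow_apply (hγn : ((γ ^ n : SV m k ≃ₗ[ℂ] SV m k) : SV m k →ₗ[ℂ] SV m k)
    = c • LinearMap.id) (w : SV m k) : (γ ^ n) w = c • w := by
  have := LinearMap.ext_iff.mp hγn w
  simpa using this

lemma symm_pow_n (hc : c ≠ 0)
    (hγn : ((γ ^ n : SV m k ≃ₗ[ℂ] SV m k) : SV m k →ₗ[ℂ] SV m k) = c • LinearMap.id)
    (v : SV m k) : (γ ^ n).symm v = c⁻¹ • v := by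
  apply (γ ^ n).injective
  rw [LinearEquiv.apply_symm_apply, map_smul, gamma_pow_apply hγn, smul_smul,
    inv_mul_cancel₀ hc, one_smul]

lemma hconj_iter_n (hc : c ≠ 0)
    (hγn : ((γ ^ n : SV m k ≃ₗ[ℂ] SV m k) : SV m k →ₗ[ℂ] SV m k) = c • LinearMap.id)
    (a : SV m k →ₗ[ℂ] SV m k) : (hConj m k γ)^[n] a = a := by
  rw [hconj_iterate]
  refine LinearMap.ext fun v => ?_
  simp only [LinearMap.comp_apply, LinearEquiv.coe_coe]
  rw [gamma_pow_apply hγn, map_smul, symm_pow_n hc hγn, smul_smul,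
    inv_mul_cancel₀ hc, one_smul]

lemma eigdecomp (hγ : IsHomogeneousOp m k γ.toLinearMap pγ) (hn : 0 < n) (hc : c ≠ 0)
    (hγn : ((γ ^ n : SV m k ≃ₗ[ℂ] SV m k) : SV m k →ₗ[ℂ] SV m k) = c • LinearMap.id)
    {z : SV m k →ₗ[ℂ] SV m k} {pz : Bool} (hz : IsHomogeneousOp m k z pz) :
    ∃ g : Fin n → (SV m k →ₗ[ℂ] SV m k), z = ∑ j, g j ∧
      ∀ j, IsHomogeneousOp m k (g j) pz ∧ ∃ l : ℂ, hConj m k γ (g j) = l • g j := by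
  have hnc : (n : ℂ) ≠ 0 := Nat.cast_ne_zero.mpr hn.ne'
  set ω := Complex.exp (2 * Real.pi * Complex.I / n) with hωdef
  have hω : IsPrimitiveRoot ω n := Complex.isPrimitiveRoot_exp n hn.ne'
  have hωn : ω ^ n = 1 := hω.pow_eq_one
  refine ⟨fun j => (n : ℂ)⁻¹ • ∑ i ∈ Finset.range n,
    (ω ^ (j : ℕ)) ^ (n - i) • (hConj m k γ)^[i] z, ?_, ?_⟩
  · rw [← Finset.smul_sum]
    have hswap : ∑ j : Fin n, ∑ i ∈ Finset.range n,
        (ω ^ (j : ℕ)) ^ (n - i) • (hConj m k γ)^[i] z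
        = ∑ i ∈ Finset.range n, (∑ j ∈ Finset.range n, (ω ^ (n - i)) ^ j) •
            (hConj m k γ)^[i] z := by
      rw [Finset.sum_comm]
      refine Finset.sum_congr rfl fun i _ => ?_
      rw [Finset.sum_smul]
      rw [← Fin.sum_univ_eq_sum_range (fun j => (ω ^ (n - i)) ^ j • (hConj m k γ)^[i] z) n]
      refine Finset.sum_congr rfl fun j _ => ?_
      congr 1
      rw [← pow_mul, ← pow_mul, Nat.mul_comm]
    rw [hswap]
    have hone : ∑ i ∈ Finset.range n, (∑ j ∈ Finset.range n, (ω ^ (n - i)) ^ j) •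
        (hConj m k γ)^[i] z = (n : ℂ) • z := by
      rw [Finset.sum_eq_single_of_mem 0 (Finset.mem_range.mpr hn)]
      · rw [Nat.sub_zero]
        have : ∀ j, (ω ^ n) ^ j = 1 := fun j => by rw [hωn, one_pow]
        rw [Finset.sum_congr rfl fun j _ => this j]
        simp [Function.iterate_zero_apply]
      · intro i hi hi0
        have hilt := Finset.mem_range.mp hi
        have h1 : ω ^ (n - i) ≠ 1 :=
          hω.pow_ne_one_of_pos_of_lt (by omega) (by omega)
        have h2 : (ω ^ (n - i)) ^ n = 1 := by
          rw [← pow_mul, Nat.mul_comm, pow_mul, hωn, one_pow]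
        rw [geom_sum_eq h1, h2, sub_self, zero_div, zero_smul]
    rw [hone, smul_smul, inv_mul_cancel₀ hnc, one_smul]
  · intro j
    constructor
    · exact hom_smul _ (hom_sum _ _ fun i _ => hom_smul _ (hconj_iter_hom hγ i hz))
    · refine ⟨ω ^ (j : ℕ), ?_⟩
      set μ := ω ^ (j : ℕ) with hμdef
      have hμn : μ ^ n = 1 := by
        rw [hμdef, ← pow_mul, Nat.mul_comm, pow_mul, hωn, one_pow]
      rw [hconj_smul, hconj_sum]
      have h1 : ∀ i, hConj m k γ (μ ^ (n - i) • (hConj m k γ)^[i] z)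
          = μ ^ (n + 1 - (i + 1)) • (hConj m k γ)^[i + 1] z := by
        intro i
        rw [hconj_smul, ← Function.iterate_succ_apply' (hConj m k γ) i z]
        congr 2
        omega
      rw [Finset.sum_congr rfl fun i _ => h1 i]
      have hfn : μ ^ (n + 1 - n) • (hConj m k γ)^[n] z = μ • z := by
        rw [hconj_iter_n hc hγn]
        congr 1
        rw [show n + 1 - n = 1 by omega, pow_one]
      have hf0 : μ ^ (n + 1 - 0) • (hConj m k γ)^[0] z = μ • z := by
        rw [Function.iterate_zero_apply, Nat.sub_zero, pow_succ, mul_comm, mul_smul, hμn,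
          smul_smul, mul_one]
      have e4 : ∑ i ∈ Finset.range n, μ ^ (n + 1 - (i + 1)) • (hConj m k γ)^[i + 1] z
          = ∑ i ∈ Finset.range n, μ ^ (n + 1 - i) • (hConj m k γ)^[i] z := by
        have h6 := Finset.sum_range_succ' (fun i => μ ^ (n + 1 - i) • (hConj m k γ)^[i] z) n
        rw [Finset.sum_range_succ (fun i => μ ^ (n + 1 - i) • (hConj m k γ)^[i] z) n] at h6
        rw [hfn, hf0] at h6
        exact (add_right_cancel h6).symm
      rw [e4]
      have e5 : ∑ i ∈ Finset.range n, μ ^ (n + 1 - i) • (hConj m k γ)^[i] z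
          = μ • ∑ i ∈ Finset.range n, μ ^ (n - i) • (hConj m k γ)^[i] z := by
        rw [Finset.smul_sum]
        refine Finset.sum_congr rfl fun i hi => ?_
        rw [smul_smul]
        congr 1
        have hi' := Finset.mem_range.mp hi
        rw [show n + 1 - i = (n - i) + 1 by omega, pow_succ, mul_comm]
      rw [e5, smul_comm]

end N

end Decomp

/-! ### uniqueness -/

section Step

variable {γ : SV m k ≃ₗ[ℂ] SV m k} {pγ : Bool}

lemma pw_symm_s (hγ : IsHomogeneousOp m k γ.toLinearMap pγ) (v : SV m k) :
    γ.symm (sO m k pγ v) = sgn pγ • sO m k pγ (γ.symm v) := by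
  have h := pw_s_hom (pγ := pγ) (hom_symm γ hγ) v
  simp only [LinearEquiv.coe_coe] at h
  rw [h, smul_smul]
  cases pγ <;> simp [sgn]

lemma hconj_id : hConj m k γ LinearMap.id = (1 : ℂ) • LinearMap.id := by
  refine LinearMap.ext fun v => ?_
  simp [hConj]

variable {f : (SV m k →ₗ[ℂ] SV m k) →ₗ[ℂ] ℂ}

lemma f_vanish (hf : IsHSupersymmetric m k γ (fun a => f a))
    {w : SV m k →ₗ[ℂ] SV m k} {pw : Bool} {lw : ℂ}
    (hw : IsHomogeneousOp m k w pw) (hew : hConj m k γ w = lw • w) (hlw : lw ≠ 1) :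
    f w = 0 := by
  have h := hf w LinearMap.id pw false lw 1 hw hom_id hew hconj_id
  rw [LinearMap.comp_id, LinearMap.id_comp, mul_one, if_neg hlw] at h
  simpa using h

lemma stepA_eig (hγ : IsHomogeneousOp m k γ.toLinearMap pγ)
    (hf : IsHSupersymmetric m k γ (fun a => f a))
    {x y : SV m k →ₗ[ℂ] SV m k} {px py : Bool} {lx ly : ℂ}
    (hx : IsHomogeneousOp m k x px) (hy : IsHomogeneousOp m k y py)
    (hex : hConj m k γ x = lx • x) (hey : hConj m k γ y = ly • y) :
    f ((x ∘ₗ y) ∘ₗ (sO m k pγ ∘ₗ γ.symm.toLinearMap))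
      = sgn (px && py) * f ((y ∘ₗ x) ∘ₗ (sO m k pγ ∘ₗ γ.symm.toLinearMap)) := by
  by_cases hxz : x = 0
  · subst hxz
    simp only [LinearMap.zero_comp, LinearMap.comp_zero, map_zero, mul_zero]
  by_cases hyz : y = 0
  · subst hyz
    simp only [LinearMap.zero_comp, LinearMap.comp_zero, map_zero, mul_zero]
  have hlx := eig_nonzero γ hex hxz
  have hly := eig_nonzero γ hey hyz
  have hw : hConj m k γ ((x ∘ₗ y) ∘ₗ (sO m k pγ ∘ₗ γ.symm.toLinearMap))
      = (sgn pγ * (lx * ly)) • ((x ∘ₗ y) ∘ₗ (sO m k pγ ∘ₗ γ.symm.toLinearMap)) := by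
    refine LinearMap.ext fun v => ?_
    simp only [hConj, LinearMap.comp_apply, LinearMap.smul_apply, LinearEquiv.coe_coe]
    rw [pw_symm_gamma, pw_symm_eig hex, pw_symm_eig hey, pw_symm_s hγ]
    simp only [map_smul, smul_smul]
    try (congr 1; ring)
  have hw' : hConj m k γ ((y ∘ₗ x) ∘ₗ (sO m k pγ ∘ₗ γ.symm.toLinearMap))
      = (sgn pγ * (ly * lx)) • ((y ∘ₗ x) ∘ₗ (sO m k pγ ∘ₗ γ.symm.toLinearMap)) := by
    refine LinearMap.ext fun v => ?_
    simp only [hConj, LinearMap.comp_apply, LinearMap.smul_apply, LinearEquiv.coe_coe]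
    rw [pw_symm_gamma, pw_symm_eig hey, pw_symm_eig hex, pw_symm_s hγ]
    simp only [map_smul, smul_smul]
    try (congr 1; ring)
  by_cases hca : sgn pγ * (lx * ly) = 1
  · -- main case
    have hbhom : IsHomogeneousOp m k (y ∘ₗ (sO m k pγ ∘ₗ γ.symm.toLinearMap))
        (py ^^ (false ^^ pγ)) :=
      hom_comp hy (hom_comp hom_sO (hom_symm γ hγ))
    have hbe : hConj m k γ (y ∘ₗ (sO m k pγ ∘ₗ γ.symm.toLinearMap))
        = (ly * sgn pγ) • (y ∘ₗ (sO m k pγ ∘ₗ γ.symm.toLinearMap)) := by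
      refine LinearMap.ext fun v => ?_
      simp only [hConj, LinearMap.comp_apply, LinearMap.smul_apply, LinearEquiv.coe_coe]
      rw [pw_symm_gamma, pw_symm_eig hey, pw_symm_s hγ]
      simp only [map_smul, smul_smul]
      try (congr 1; ring)
    have hba : (y ∘ₗ (sO m k pγ ∘ₗ γ.symm.toLinearMap)) ∘ₗ x
        = (lx * sgn (px && pγ)) • ((y ∘ₗ x) ∘ₗ (sO m k pγ ∘ₗ γ.symm.toLinearMap)) := by
      refine LinearMap.ext fun v => ?_
      simp only [LinearMap.comp_apply, LinearMap.smul_apply, LinearEquiv.coe_coe]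
      rw [pw_symm_eig hex]
      simp only [map_smul]
      rw [pw_s_hom (pγ := pγ) hx]
      simp only [map_smul, smul_smul]
      try (congr 1; ring)
    have h := hf x (y ∘ₗ (sO m k pγ ∘ₗ γ.symm.toLinearMap)) px (py ^^ (false ^^ pγ))
      lx (ly * sgn pγ) hx hbhom hex hbe
    have hif : lx * (ly * sgn pγ) = 1 := by rw [← hca]; ring
    rw [hba] at h
    simp only [map_smul, smul_eq_mul] at h
    rw [if_pos hif] at h
    have hassoc : x ∘ₗ (y ∘ₗ (sO m k pγ ∘ₗ γ.symm.toLinearMap))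
        = (x ∘ₗ y) ∘ₗ (sO m k pγ ∘ₗ γ.symm.toLinearMap) := by
      rw [LinearMap.comp_assoc]
    rw [hassoc] at h
    rw [h]
    cases px <;> cases py <;> cases pγ <;> simp [sgn] <;> field_simp <;> try ring
  · -- vanishing case
    have h1 : f ((x ∘ₗ y) ∘ₗ (sO m k pγ ∘ₗ γ.symm.toLinearMap)) = 0 :=
      f_vanish hf (hom_comp (hom_comp hx hy) (hom_comp hom_sO (hom_symm γ hγ))) hw hca
    have h2 : f ((y ∘ₗ x) ∘ₗ (sO m k pγ ∘ₗ γ.symm.toLinearMap)) = 0 :=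
      f_vanish hf (hom_comp (hom_comp hy hx) (hom_comp hom_sO (hom_symm γ hγ))) hw'
        (by rw [mul_comm ly lx]; exact hca)
    rw [h1, h2, mul_zero]

lemma stepA {n : ℕ} {c : ℂ} (hγ : IsHomogeneousOp m k γ.toLinearMap pγ)
    (hn : 0 < n) (hc : c ≠ 0)
    (hγn : ((γ ^ n : SV m k ≃ₗ[ℂ] SV m k) : SV m k →ₗ[ℂ] SV m k) = c • LinearMap.id)
    (hf : IsHSupersymmetric m k γ (fun a => f a))
    {x y : SV m k →ₗ[ℂ] SV m k} {px py : Bool}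
    (hx : IsHomogeneousOp m k x px) (hy : IsHomogeneousOp m k y py) :
    f ((x ∘ₗ y) ∘ₗ (sO m k pγ ∘ₗ γ.symm.toLinearMap))
      = sgn (px && py) * f ((y ∘ₗ x) ∘ₗ (sO m k pγ ∘ₗ γ.symm.toLinearMap)) := by
  obtain ⟨gx, hgx, hxprop⟩ := eigdecomp hγ hn hc hγn hx
  obtain ⟨gy, hgy, hyprop⟩ := eigdecomp hγ hn hc hγn hy
  have hdist : ((∑ j, gx j) ∘ₗ (∑ j', gy j')) ∘ₗ (sO m k pγ ∘ₗ γ.symm.toLinearMap)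
      = ∑ j, ∑ j', ((gx j ∘ₗ gy j') ∘ₗ (sO m k pγ ∘ₗ γ.symm.toLinearMap)) := by
    refine LinearMap.ext fun v => ?_
    simp [LinearMap.sum_apply, map_sum]
  have hdist2 : ((∑ j', gy j') ∘ₗ (∑ j, gx j)) ∘ₗ (sO m k pγ ∘ₗ γ.symm.toLinearMap)
      = ∑ j, ∑ j', ((gy j' ∘ₗ gx j) ∘ₗ (sO m k pγ ∘ₗ γ.symm.toLinearMap)) := by
    refine LinearMap.ext fun v => ?_
    simp [LinearMap.sum_apply, map_sum]
    rw [Finset.sum_comm]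
  rw [hgx, hgy, hdist, hdist2, map_sum, map_sum, Finset.mul_sum]
  refine Finset.sum_congr rfl fun j _ => ?_
  rw [map_sum, map_sum, Finset.mul_sum]
  refine Finset.sum_congr rfl fun j' _ => ?_
  obtain ⟨lx, hlx⟩ := (hxprop j).2
  obtain ⟨ly, hly⟩ := (hyprop j').2
  exact stepA_eig hγ hf (hxprop j).1 (hyprop j').1 hlx hly

lemma part3 {n : ℕ} {c : ℂ} (hγ : IsHomogeneousOp m k γ.toLinearMap pγ)
    (hmk : 0 < m + k) (hn : 0 < n) (hc : c ≠ 0)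
    (hγn : ((γ ^ n : SV m k ≃ₗ[ℂ] SV m k) : SV m k →ₗ[ℂ] SV m k) = c • LinearMap.id)
    (hf : IsHSupersymmetric m k γ (fun a => f a)) :
    ∃ d : ℂ, ∀ a, f a = d * strF γ pγ a := by
  classical
  have hr : Nonempty (Fin m ⊕ Fin k) := by
    by_cases hm : 0 < m
    · exact ⟨Sum.inl ⟨0, hm⟩⟩
    · exact ⟨Sum.inr ⟨0, by omega⟩⟩
  obtain ⟨r⟩ := hr
  set u₀ := sO m k pγ ∘ₗ γ.symm.toLinearMap with hu₀
  set G : (SV m k →ₗ[ℂ] SV m k) → ℂ := fun z => f (z ∘ₗ u₀) with hG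
  set d : ℂ := sgn (par r) * G (Eu m k r r) with hd
  have hGA : ∀ x y px py, IsHomogeneousOp m k x px → IsHomogeneousOp m k y py →
      G (x ∘ₗ y) = sgn (px && py) * G (y ∘ₗ x) := by
    intro x y px py hx hy
    have h := stepA hγ hn hc hγn hf hx hy
    simpa [hG, hu₀, LinearMap.comp_assoc] using h
  have hgen : ∀ x y : Fin m ⊕ Fin k, G (Eu m k x y) = d * supertraceOp m k (Eu m k x y) := by
    intro x y
    by_cases hxy : x = y
    · subst hxy
      rw [str_Eu_diag]
      have h := hGA (Eu m k x r) (Eu m k r x) (xor (par x) (par r)) (xor (par r) (par x))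
        (hom_Eu x r) (hom_Eu r x)
      rw [Eu_comp_same, Eu_comp_same] at h
      rw [h, hd]
      cases hpx : par x <;> cases hpr : par r <;> simp [sgn] <;> ring
    · have h := hGA (Eu m k x y) (Eu m k y y) (xor (par x) (par y)) (xor (par y) (par y))
        (hom_Eu x y) (hom_Eu y y)
      rw [Eu_comp_same, Eu_comp_ne (Ne.symm hxy)] at h
      simp only [Bool.xor_self, Bool.and_false, sgn_false, one_mul] at h
      rw [str_Eu_off hxy, mul_zero, h]
      simp only [hG]
      rw [LinearMap.zero_comp, map_zero]
  have hall : ∀ z, G z = d * supertraceOp m k z := by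
    intro z
    have hmem := mem_span_Eu z
    induction hmem using Submodule.span_induction with
    | mem w hw =>
      obtain ⟨p, rfl⟩ := hw
      exact hgen p.1 p.2
    | zero =>
      rw [str_zero, mul_zero]
      simp only [hG]
      rw [LinearMap.zero_comp, map_zero]
    | add w₁ w₂ _ _ ih1 ih2 =>
      rw [str_add, mul_add, ← ih1, ← ih2]
      simp only [hG]
      rw [LinearMap.add_comp, map_add]
    | smul t w _ ih =>
      rw [str_smul, ← mul_assoc, mul_comm d t, mul_assoc, ← ih]
      simp only [hG]
      rw [LinearMap.smul_comp, map_smul, smul_eq_mul]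
  refine ⟨d, fun a => ?_⟩
  have hback : (a ∘ₗ γ.toLinearMap ∘ₗ sO m k pγ) ∘ₗ u₀ = a := by
    refine LinearMap.ext fun v => ?_
    simp only [hu₀, LinearMap.comp_apply, LinearEquiv.coe_coe]
    rw [pw_ss, pw_gamma_symm]
  have h1 : f a = G (a ∘ₗ γ.toLinearMap ∘ₗ sO m k pγ) := by
    rw [hG]
    simp only []
    rw [hback]
  rw [h1, hall]
  rfl

end Step

end HSupAux

open HSupAux in
/-- For the Type I simple superalgebra `A = End(ℂ^{m|k})` with irreducible module
`N = ℂ^{m|k}`, a finite-order automorphism `h = (γ⁻¹ · γ)` implemented by a homogeneous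
invertible `γ`, the space of `h`-supersymmetric functions on `A` is one dimensional,
spanned by the (nonzero, `h`-supersymmetric) function `a ↦ str_N(a γ σ_N^{p(γ)})`. -/
theorem hsupersymmetric_functions_typeI (m k : ℕ) (hmk : 0 < m + k)
    (γ : SV m k ≃ₗ[ℂ] SV m k) (pγ : Bool)
    (hγhom : IsHomogeneousOp m k γ.toLinearMap pγ)
    (hord : ∃ (n : ℕ) (c : ℂ), 0 < n ∧
      ((γ ^ n : SV m k ≃ₗ[ℂ] SV m k) : SV m k →ₗ[ℂ] SV m k) = c • LinearMap.id) :
    (∃ a : SV m k →ₗ[ℂ] SV m k,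
      supertraceOp m k (a ∘ₗ γ.toLinearMap ∘ₗ (if pγ then sigmaN m k else LinearMap.id)) ≠ 0) ∧
    IsHSupersymmetric m k γ (fun a =>
      supertraceOp m k (a ∘ₗ γ.toLinearMap ∘ₗ (if pγ then sigmaN m k else LinearMap.id))) ∧
    ∀ f : (SV m k →ₗ[ℂ] SV m k) →ₗ[ℂ] ℂ, IsHSupersymmetric m k γ (fun a => f a) →
      ∃ c : ℂ, ∀ a, f a = c *
        supertraceOp m k (a ∘ₗ γ.toLinearMap ∘ₗ (if pγ then sigmaN m k else LinearMap.id)) := by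
  obtain ⟨n, c, hn, hγn⟩ := hord
  have hsO : (if pγ then sigmaN m k else LinearMap.id) = sO m k pγ := rfl
  have hc : c ≠ 0 := by
    intro hc0
    subst hc0
    have hx : Nonempty (Fin m ⊕ Fin k) := by
      by_cases hm : 0 < m
      · exact ⟨Sum.inl ⟨0, hm⟩⟩
      · exact ⟨Sum.inr ⟨0, by omega⟩⟩
    obtain ⟨x⟩ := hx
    have h1 := gamma_pow_apply hγn (incl m k x 1)
    rw [zero_smul] at h1
    have h2 : incl m k x 1 = 0 := by
      have := (γ ^ n).injective (by rw [h1, map_zero] : (γ ^ n) (incl m k x 1) = (γ ^ n) 0)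
      exact this
    have h3 := congrArg (prj m k x) h2
    rw [map_zero] at h3
    have h4 := LinearMap.ext_iff.mp (prj_incl_same x) 1
    simp only [LinearMap.comp_apply, LinearMap.id_apply] at h4
    rw [h3] at h4
    exact one_ne_zero h4.symm
  refine ⟨?_, ?_, ?_⟩
  · rw [hsO]
    exact part1 hγhom hmk
  · rw [hsO]
    exact part2 hγhom
  · intro f hf
    rw [hsO]
    exact part3 hγhom hmk hn hc hγn hf
end

section
/- Let A be a finite-dimensional semisimple superalgebra with decomposition A = ⊕_{i∈I} A_i into simple components, and h a finite-order automorphism of A (which permutes the components). Then the space of h-supersymmetric functions on A decomposes as F_h(A) = ⊕_{i∈J} F_h(A_i), where J ⊆ I is the set of indices of h-invariant simple components; in particular every h-supersymmetric function vanishes on simple components not fixed by h. -/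
/-- Auxiliary: the parity involution on a product of superalgebras, as a linear map. -/
def hsupersymmetricAux.SLin {I : Type*} (A : I → Type*) [∀ i, Ring (A i)]
    [∀ i, Algebra ℂ (A i)] (σ : ∀ i, A i ≃ₐ[ℂ] A i) : (∀ i, A i) →ₗ[ℂ] (∀ i, A i) where
  toFun a := fun j => σ j (a j)
  map_add' a b := funext fun j => map_add (σ j) (a j) (b j)
  map_smul' c a := funext fun j => map_smul (σ j) c (a j)

/-- Let `A = ⊕ᵢ Aᵢ` be a finite-dimensional semisimple superalgebra, presented as a finite
product of its simple components (each component's grading encoded by a parity involution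
`σ i`, simplicity meaning graded two-sided ideals are trivial), and let `h` be a
finite-order (even) automorphism of `A`, permuting the components by the permutation `π`.
Then every `h`-supersymmetric function `f` on `A` vanishes on the simple components not
fixed by `h`, so `f` decomposes as the sum of its restrictions to the `h`-invariant
components: `F_h(A) = ⊕_{i ∈ J} F_h(Aᵢ)` with `J = {i | π i = i}`. -/
theorem hsupersymmetric_decomposition_semisimple
    (I : Type*) [Fintype I] [DecidableEq I]
    (A : I → Type*) [∀ i, Ring (A i)] [∀ i, Algebra ℂ (A i)]
    [∀ i, FiniteDimensional ℂ (A i)] [∀ i, Nontrivial (A i)]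
    (σ : ∀ i, A i ≃ₐ[ℂ] A i) (hσ2 : ∀ i a, σ i (σ i a) = a)
    (hsimple : ∀ i, ∀ J : TwoSidedIdeal (A i), (∀ a ∈ J, σ i a ∈ J) → J = ⊥ ∨ J = ⊤)
    (h : (∀ i, A i) ≃ₐ[ℂ] (∀ i, A i))
    (hEven : ∀ (a : ∀ i, A i) (i : I), h (fun j => σ j (a j)) i = σ i (h a i))
    (hOrd : ∃ N : ℕ, 0 < N ∧ ∀ a, (h ^ N) a = a)
    (π : Equiv.Perm I)
    (hπ : ∀ (i j : I) (a : A i), j ≠ π i → h (Pi.single i a) j = 0)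
    (f : (∀ i, A i) →ₗ[ℂ] ℂ)
    (hf : ∀ (a b : ∀ i, A i) (pa pb : Bool) (la lb : ℂ),
      ((fun j => σ j (a j)) = (if pa then -a else a)) →
      ((fun j => σ j (b j)) = (if pb then -b else b)) →
      h a = la • a → h b = lb • b →
      f (a * b) = (if la * lb = 1 then 1 else 0) *
        (if pa && pb then (-1 : ℂ) else 1) * la⁻¹ * f (b * a)) :
    (∀ i, π i ≠ i → ∀ a : A i, f (Pi.single i a) = 0) ∧
    (∀ a, f a = ∑ i ∈ Finset.univ.filter (fun i => π i = i), f (Pi.single i (a i))) := by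
  classical
  obtain ⟨N, hN0, hNid⟩ := hOrd
  set S := hsupersymmetricAux.SLin A σ with hSdef
  have hSapp : ∀ (a : ∀ i, A i), S a = fun j => σ j (a j) := fun a => rfl
  have hSS : ∀ (a : ∀ i, A i), S (S a) = a := fun a => funext fun j => hσ2 j (a j)
  have hSh : ∀ (a : ∀ i, A i), h (S a) = S (h a) := fun a => funext fun i => hEven a i
  have hpowsucc : ∀ (k : ℕ) (a : ∀ i, A i), (h ^ (k+1)) a = h ((h ^ k) a) := by
    intro k a; rw [pow_succ']; rfl
  have hpowzero : ∀ (a : ∀ i, A i), (h ^ 0) a = a := fun a => rfl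
  have hpowsucc' : ∀ (k : ℕ) (a : ∀ i, A i), (h ^ (k+1)) a = (h ^ k) (h a) := by
    intro k a; rw [pow_succ]; rfl
  have hπpowsucc : ∀ (k : ℕ) (i : I), (π ^ (k+1)) i = π ((π ^ k) i) := by
    intro k i; rw [pow_succ']; rfl
  have hπpowzero : ∀ (i : I), (π ^ 0) i = i := fun i => rfl
  have hSpow : ∀ (k : ℕ) (a : ∀ i, A i), (h ^ k) (S a) = S ((h ^ k) a) := by
    intro k
    induction k with
    | zero => intro a; rw [hpowzero, hpowzero]
    | succ k ih => intro a; rw [hpowsucc, hpowsucc, ih, hSh]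
  -- v supported at j is a single
  have single_form : ∀ (v : ∀ i, A i) (j : I), (∀ t, t ≠ j → v t = 0) → v = Pi.single j (v j) := by
    intro v j hv; funext t
    by_cases ht : t = j
    · subst ht; rw [Pi.single_eq_same]
    · rw [Pi.single_eq_of_ne ht, hv t ht]
  have hpow_single : ∀ (k : ℕ) (i : I) (a : A i),
      ∃ b, (h ^ k) (Pi.single i a) = Pi.single ((π ^ k) i) b := by
    intro k
    induction k with
    | zero => intro i a; exact ⟨a, rfl⟩
    | succ k ih =>
      intro i a
      obtain ⟨b, hb⟩ := ih i a
      rw [hpowsucc, hb, hπpowsucc]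
      exact ⟨_, single_form _ _ (fun t ht => hπ _ _ _ ht)⟩
  -- the unit idempotents
  set e : ∀ j : I, (∀ i, A i) := fun j => Pi.single j (1 : A j) with he
  have h_e : ∀ i₀ : I, h (e i₀) = e (π i₀) := by
    intro i₀
    have hval : h (e i₀) (π i₀) = 1 := by
      have h1 : (1 : ∀ i, A i) = ∑ i, e i := by
        rw [he]
        exact (Finset.univ_sum_single (1 : ∀ i, A i)).symm
      have h2 : (1 : ∀ i, A i) = ∑ i, h (e i) := by
        conv_lhs => rw [← map_one h, h1, map_sum]
      have h3 := congrFun h2 (π i₀)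
      rw [Finset.sum_apply] at h3
      rw [Finset.sum_eq_single i₀ (fun j _ hj => hπ _ _ _ (fun hc => hj (π.injective hc).symm))
        (fun hmem => absurd (Finset.mem_univ i₀) hmem)] at h3
      exact h3.symm
    have := single_form (h (e i₀)) (π i₀) (fun t ht => hπ _ _ _ ht)
    rw [hval] at this
    exact this
  have h_e_pow : ∀ (k : ℕ) (i₀ : I), (h ^ k) (e i₀) = e ((π ^ k) i₀) := by
    intro k
    induction k with
    | zero => intro i₀; rfl
    | succ k ih => intro i₀; rw [hpowsucc, ih, h_e, hπpowsucc]
  have hπN : ∀ i₀ : I, (π ^ N) i₀ = i₀ := by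
    intro i₀
    by_contra hne
    have h1 : (h ^ N) (e i₀) = e i₀ := hNid _
    rw [h_e_pow] at h1
    have h2 := congrFun h1 i₀
    rw [he] at h2
    simp only at h2
    rw [Pi.single_eq_same, Pi.single_eq_of_ne (fun hc : i₀ = (π ^ N) i₀ => hne hc.symm)] at h2
    exact zero_ne_one h2
  -- Lemma A : f vanishes on eigenvectors with eigenvalue ≠ 1
  have LemA : ∀ (v : ∀ i, A i) (p : Bool) (lv : ℂ),
      S v = (if p then -v else v) → h v = lv • v → lv ≠ 1 → f v = 0 := by
    intro v p lv hpar heig hlv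
    have h1par : (fun j => σ j ((1 : ∀ i, A i) j)) =
        (if false then -(1 : ∀ i, A i) else (1 : ∀ i, A i)) := by
      simp only [Bool.false_eq_true, if_false]
      funext j
      exact map_one (σ j)
    have h1eig : h (1 : ∀ i, A i) = (1 : ℂ) • (1 : ∀ i, A i) := by rw [map_one, one_smul]
    have key := hf v 1 p false lv 1 hpar h1par heig h1eig
    rw [mul_one, mul_one, if_neg hlv] at key
    simpa using key
  -- shift lemma
  have shift : ∀ (G : ℕ → (∀ i, A i)), G N = G 0 →
      ∑ k ∈ Finset.range N, G (k + 1) = ∑ k ∈ Finset.range N, G k := by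
    intro G hG
    have h1 := Finset.sum_range_succ' G N
    have h2 := Finset.sum_range_succ G N
    have h3 := h1.symm.trans h2
    rw [hG] at h3
    exact add_right_cancel h3
  -- eigenvector construction
  have eig : ∀ (η : ℂ), η ^ N = 1 → ∀ (g : ℕ → (∀ i, A i)),
      (∀ k, h (g k) = g (k + 1)) → g N = g 0 →
      h (∑ k ∈ Finset.range N, η ^ k • g k) = η⁻¹ • ∑ k ∈ Finset.range N, η ^ k • g k := by
    intro η hη g hg0 hgN
    have hη0 : η ≠ 0 := by
      intro h0; rw [h0, zero_pow hN0.ne'] at hη; exact zero_ne_one hη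
    calc h (∑ k ∈ Finset.range N, η ^ k • g k)
        = ∑ k ∈ Finset.range N, η ^ k • g (k + 1) := by
          rw [map_sum]
          exact Finset.sum_congr rfl fun k _ => by rw [map_smul, hg0]
      _ = ∑ k ∈ Finset.range N, η⁻¹ • (η ^ (k + 1) • g (k + 1)) :=
          Finset.sum_congr rfl fun k _ => by
            rw [smul_smul, pow_succ', ← mul_assoc, inv_mul_cancel₀ hη0, one_mul]
      _ = η⁻¹ • ∑ k ∈ Finset.range N, η ^ (k + 1) • g (k + 1) := (Finset.smul_sum).symm
      _ = η⁻¹ • ∑ k ∈ Finset.range N, η ^ k • g k := by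
          exact congrArg _ (shift (fun k => η ^ k • g k)
            (by simp only [hgN, hη, pow_zero, one_smul]))
  -- parity of such combinations
  have Spar : ∀ (η : ℂ) (g : ℕ → (∀ i, A i)) (p : Bool),
      (∀ k, S (g k) = (if p then -(g k) else g k)) →
      S (∑ k ∈ Finset.range N, η ^ k • g k) =
        (if p then -(∑ k ∈ Finset.range N, η ^ k • g k)
         else ∑ k ∈ Finset.range N, η ^ k • g k) := by
    intro η g p hg
    rw [map_sum]
    cases p with
    | false =>
      simp only [Bool.false_eq_true, if_false] at hg ⊢
      exact Finset.sum_congr rfl fun k _ => by rw [map_smul, hg]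
    | true =>
      simp only [if_true] at hg ⊢
      rw [← Finset.sum_neg_distrib]
      exact Finset.sum_congr rfl fun k _ => by rw [map_smul, hg, smul_neg]
  -- geometric sums
  have geo : ∀ (c : ℂ), c ≠ 1 → c ^ N = 1 → ∑ j ∈ Finset.range N, c ^ j = 0 := by
    intro c hc1 hcN
    have hg := geom_sum_mul c N
    rw [hcN, sub_self] at hg
    rcases mul_eq_zero.mp hg with h' | h'
    · exact h'
    · exact absurd (sub_eq_zero.mp h') hc1
  -- N * f y = f (∑ h^k y) for parity eigenvectors y
  have fT : ∀ (y : ∀ i, A i) (p : Bool), S y = (if p then -y else y) →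
      (N : ℂ) * f y = f (∑ k ∈ Finset.range N, (h ^ k) y) := by
    intro y p hy
    set ζ := Complex.exp (2 * Real.pi * Complex.I / N) with hζ
    have hprim : IsPrimitiveRoot ζ N := Complex.isPrimitiveRoot_exp N hN0.ne'
    have hζN : ζ ^ N = 1 := hprim.pow_eq_one
    have hgy0 : ∀ k, h ((h ^ k) y) = (h ^ (k + 1)) y := fun k => (hpowsucc k y).symm
    have hgyN : (h ^ N) y = (h ^ 0) y := by rw [hNid]; exact (hpowzero y).symm
    have hpark : ∀ k : ℕ, S ((h ^ k) y) = (if p then -((h ^ k) y) else (h ^ k) y) := by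
      intro k
      rw [← hSpow, hy]
      cases p with
      | false => simp
      | true => simp only [if_true]; rw [map_neg]
    have hWzero : ∀ j : ℕ, 0 < j → j < N →
        f (∑ k ∈ Finset.range N, (ζ ^ j) ^ k • (h ^ k) y) = 0 := by
      intro j hj0 hjN
      have hηN : (ζ ^ j) ^ N = 1 := by rw [← pow_mul, mul_comm, pow_mul, hζN, one_pow]
      have hη1 : ζ ^ j ≠ 1 := hprim.pow_ne_one_of_pos_of_lt hj0.ne' hjN
      refine LemA _ p ((ζ ^ j)⁻¹) (Spar _ _ p hpark) (eig _ hηN _ hgy0 hgyN) ?_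
      intro hc
      apply hη1
      rw [← inv_inv (ζ ^ j), hc, inv_one]
    have hsum : ∑ j ∈ Finset.range N, f (∑ k ∈ Finset.range N, (ζ ^ j) ^ k • (h ^ k) y) =
        f (∑ k ∈ Finset.range N, (h ^ k) y) := by
      rw [Finset.sum_eq_single_of_mem 0 (Finset.mem_range.mpr hN0)
        (fun j hj hj0 => hWzero j (Nat.pos_of_ne_zero hj0) (Finset.mem_range.mp hj))]
      refine congrArg f (Finset.sum_congr rfl fun k _ => ?_)
      rw [pow_zero, one_pow, one_smul]
    have hsum2 : ∑ j ∈ Finset.range N, f (∑ k ∈ Finset.range N, (ζ ^ j) ^ k • (h ^ k) y) =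
        (N : ℂ) * f y := by
      have hterm : ∀ j : ℕ, f (∑ k ∈ Finset.range N, (ζ ^ j) ^ k • (h ^ k) y) =
          ∑ k ∈ Finset.range N, (ζ ^ k) ^ j * f ((h ^ k) y) := by
        intro j
        rw [map_sum]
        refine Finset.sum_congr rfl fun k _ => ?_
        rw [map_smul, smul_eq_mul, ← pow_mul, mul_comm j k, pow_mul]
      simp_rw [hterm]
      rw [Finset.sum_comm]
      have hz : ∀ k ∈ Finset.range N, k ≠ 0 →
          ∑ j ∈ Finset.range N, (ζ ^ k) ^ j * f ((h ^ k) y) = 0 := by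
        intro k hk hk0
        rw [← Finset.sum_mul]
        have hzz : ∑ j ∈ Finset.range N, (ζ ^ k) ^ j = 0 := by
          refine geo _ (hprim.pow_ne_one_of_pos_of_lt hk0
            (Finset.mem_range.mp hk)) ?_
          rw [← pow_mul, mul_comm, pow_mul, hζN, one_pow]
        rw [hzz, zero_mul]
      rw [Finset.sum_eq_single_of_mem 0 (Finset.mem_range.mpr hN0) hz]
      rw [← Finset.sum_mul]
      simp only [pow_zero, one_pow, AlgEquiv.one_apply]
      rw [Finset.sum_const, Finset.card_range, nsmul_eq_mul, mul_one]
    rw [← hsum2, hsum]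
  -- f is h-invariant
  have fh : ∀ y, f (h y) = f y := by
    have hNc : (N : ℂ) ≠ 0 := Nat.cast_ne_zero.mpr hN0.ne'
    have fhe : ∀ (y : ∀ i, A i) (p : Bool), S y = (if p then -y else y) → f (h y) = f y := by
      intro y p hy
      have hyh : S (h y) = (if p then -(h y) else h y) := by
        rw [← hSh, hy]
        cases p with
        | false => simp
        | true => simp only [if_true]; rw [map_neg]
      have h1 := fT y p hy
      have h2 := fT (h y) p hyh
      have h3 : ∑ k ∈ Finset.range N, (h ^ k) (h y) = ∑ k ∈ Finset.range N, (h ^ k) y := by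
        calc ∑ k ∈ Finset.range N, (h ^ k) (h y)
            = ∑ k ∈ Finset.range N, (h ^ (k + 1)) y :=
              Finset.sum_congr rfl fun k _ => (hpowsucc' k y).symm
          _ = ∑ k ∈ Finset.range N, (h ^ k) y :=
              shift (fun k => (h ^ k) y)
                (by show (h ^ N) y = (h ^ 0) y; rw [hNid]; exact (hpowzero y).symm)
      rw [h3] at h2
      exact mul_left_cancel₀ hNc (h2.trans h1.symm)
    intro y
    have hdec : y = (2⁻¹ : ℂ) • (y + S y) + (2⁻¹ : ℂ) • (y - S y) := by module
    have hp1 : S ((2⁻¹ : ℂ) • (y + S y)) = (2⁻¹ : ℂ) • (y + S y) := by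
      rw [map_smul, map_add, hSS, add_comm]
    have hp2 : S ((2⁻¹ : ℂ) • (y - S y)) = -((2⁻¹ : ℂ) • (y - S y)) := by
      rw [map_smul, map_sub, hSS]
      module
    calc f (h y) = f (h ((2⁻¹ : ℂ) • (y + S y))) + f (h ((2⁻¹ : ℂ) • (y - S y))) := by
          rw [← map_add, ← map_add, ← hdec]
      _ = f ((2⁻¹ : ℂ) • (y + S y)) + f ((2⁻¹ : ℂ) • (y - S y)) := by
          rw [fhe _ false (by simpa using hp1), fhe _ true (by simpa using hp2)]
      _ = f y := by rw [← map_add, ← hdec]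
  have fhpow : ∀ (k : ℕ) (y : ∀ i, A i), f ((h ^ k) y) = f y := by
    intro k
    induction k with
    | zero => intro y; rw [hpowzero]
    | succ k ih => intro y; rw [hpowsucc, fh, ih]
  -- single products
  have mul_ne : ∀ (j j' : I) (u : A j) (w : A j'), j ≠ j' →
      (Pi.single j u : ∀ t, A t) * Pi.single j' w = 0 := by
    intro j j' u w hjj
    funext t
    show Pi.single j u t * Pi.single j' w t = 0
    by_cases htj : t = j
    · subst htj
      rw [Pi.single_eq_of_ne hjj, mul_zero]
    · rw [Pi.single_eq_of_ne htj, zero_mul]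
  have e_mul : ∀ (j : I) (w : A j),
      e j * Pi.single j w = Pi.single j w ∧ Pi.single j w * e j = Pi.single j w := by
    intro j w
    constructor <;> (funext t; by_cases htj : t = j)
    · subst htj
      show Pi.single t (1 : A t) t * Pi.single t w t = Pi.single t w t
      simp [Pi.single_eq_same]
    · show Pi.single j (1 : A j) t * Pi.single j w t = Pi.single j w t
      simp [Pi.single_eq_of_ne htj]
    · subst htj
      show Pi.single t w t * Pi.single t (1 : A t) t = Pi.single t w t
      simp [Pi.single_eq_same]
    · show Pi.single j w t * Pi.single j (1 : A j) t = Pi.single j w t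
      simp [Pi.single_eq_of_ne htj]
  -- main vanishing result
  have vanish : ∀ i : I, π i ≠ i → ∀ a : A i, f (Pi.single i a) = 0 := by
    intro i hi a
    have key : ∀ (b : A i) (p : Bool), σ i b = (if p then -b else b) →
        f (Pi.single i b) = 0 := by
      intro b p hb
      set x : ∀ t, A t := Pi.single i b with hx
      have hSx : S x = (if p then -x else x) := by
        have hsx : S x = Pi.single i (σ i b) := by
          funext j
          by_cases hj : j = i
          · subst hj
            show σ j (Pi.single j b j) = Pi.single j (σ j b) j
            rw [Pi.single_eq_same, Pi.single_eq_same]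
          · show σ j (Pi.single i b j) = Pi.single i (σ i b) j
            rw [Pi.single_eq_of_ne hj, Pi.single_eq_of_ne hj, map_zero]
        rw [hsx, hb]
        cases p with
        | false => simp [hx]
        | true =>
          simp only [if_true]
          funext t
          by_cases ht : t = i
          · subst ht
            show Pi.single t (-b) t = -(Pi.single t b t)
            rw [Pi.single_eq_same, Pi.single_eq_same]
          · show Pi.single i (-b) t = -(Pi.single i b t)
            rw [Pi.single_eq_of_ne ht, Pi.single_eq_of_ne ht, neg_zero]
      -- minimal period
      have hperN : Function.IsPeriodicPt (⇑π) N i := by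
        show (⇑π)^[N] i = i
        rw [← Equiv.Perm.coe_pow]
        exact hπN i
      set m := Function.minimalPeriod (⇑π) i with hm
      have hm_dvd : m ∣ N := Function.IsPeriodicPt.minimalPeriod_dvd hperN
      have hm_pos : 0 < m := hperN.minimalPeriod_pos hN0
      have hm1 : 1 < m := by
        rcases Nat.lt_or_ge 1 m with h' | h'
        · exact h'
        · exfalso
          have : m = 1 := le_antisymm h' hm_pos
          exact hi (Function.minimalPeriod_eq_one_iff_isFixedPt.mp this)
      set ζ := Complex.exp (2 * Real.pi * Complex.I / m) with hζ
      have hprim : IsPrimitiveRoot ζ m := Complex.isPrimitiveRoot_exp m hm_pos.ne'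
      have hζm : ζ ^ m = 1 := hprim.pow_eq_one
      have hζ1 : ζ ≠ 1 := hprim.ne_one hm1
      have hζN : ζ ^ N = 1 := by
        obtain ⟨q, rfl⟩ := hm_dvd
        rw [pow_mul, hζm, one_pow]
      have hζ0 : ζ ≠ 0 := by
        intro h0; rw [h0, zero_pow hm_pos.ne'] at hζm; exact zero_ne_one hζm
      have hζinvN : (ζ⁻¹) ^ N = 1 := by rw [inv_pow, hζN, inv_one]
      -- coefficient identity
      have hπmod : ∀ k : ℕ, (π ^ k) i = (π ^ (k % m)) i := by
        intro k
        have := Function.iterate_mod_minimalPeriod_eq (f := ⇑π) (x := i) (n := k)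
        rw [← hm] at this
        calc (π ^ k) i = (⇑π)^[k] i := by rw [Equiv.Perm.coe_pow]
          _ = (⇑π)^[k % m] i := this.symm
          _ = (π ^ (k % m)) i := by rw [Equiv.Perm.coe_pow]
      have hζmod : ∀ k : ℕ, ζ ^ k = ζ ^ (k % m) := by
        intro k
        conv_lhs => rw [← Nat.div_add_mod k m]
        rw [pow_add, pow_mul, hζm, one_pow, one_mul]
      have hcoef : ∀ k l : ℕ, (π ^ k) i = (π ^ l) i → ζ ^ k * (ζ⁻¹) ^ l = 1 := by
        intro k l hkl
        have hmod : k % m = l % m := by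
          have h1 : (⇑π)^[k % m] i = (⇑π)^[l % m] i := by
            rw [← Equiv.Perm.coe_pow, ← Equiv.Perm.coe_pow, ← hπmod, ← hπmod]
            exact hkl
          exact (Function.iterate_eq_iterate_iff_of_lt_minimalPeriod
            (by rw [← hm]; exact Nat.mod_lt _ hm_pos)
            (by rw [← hm]; exact Nat.mod_lt _ hm_pos)).mp h1
        rw [inv_pow, hζmod k, hζmod l, hmod, mul_inv_cancel₀ (pow_ne_zero _ hζ0)]
      -- E and V
      set E := ∑ k ∈ Finset.range N, ζ ^ k • e ((π ^ k) i) with hE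
      set V := ∑ l ∈ Finset.range N, (ζ⁻¹) ^ l • (h ^ l) x with hV
      have hEeig : h E = ζ⁻¹ • E :=
        eig ζ hζN (fun k => e ((π ^ k) i))
          (fun k => by show h (e ((π ^ k) i)) = e ((π ^ (k+1)) i); rw [h_e, hπpowsucc])
          (by show e ((π ^ N) i) = e ((π ^ 0) i); rw [hπN i]; rfl)
      have hVeig : h V = ζ • V := by
        have := eig ζ⁻¹ hζinvN (fun l => (h ^ l) x)
          (fun l => (hpowsucc l x).symm)
          (by show (h ^ N) x = (h ^ 0) x; rw [hNid]; exact (hpowzero x).symm)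
        rw [inv_inv] at this
        exact this
      have hepar : ∀ j : I, S (e j) = e j := by
        intro j
        funext t
        by_cases ht : t = j
        · subst ht
          show σ t (Pi.single t (1 : A t) t) = Pi.single t (1 : A t) t
          rw [Pi.single_eq_same, map_one]
        · show σ t (Pi.single j (1 : A j) t) = Pi.single j (1 : A j) t
          simp [Pi.single_eq_of_ne ht]
      have hEpar : S E = E := by
        have h' := Spar ζ (fun k => e ((π ^ k) i)) false (fun k => by
          simp only [Bool.false_eq_true, if_false]; exact hepar _)
        simp only [Bool.false_eq_true, if_false] at h'
        rw [hE]
        exact h'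
      have hVpar : S V = (if p then -V else V) :=
        Spar ζ⁻¹ (fun l => (h ^ l) x) p (fun l => by
          rw [← hSpow, hSx]
          cases p with
          | false => simp
          | true => simp only [if_true]; rw [map_neg])
      -- apply supersymmetry
      have happ := hf E V false p ζ⁻¹ ζ
        (by have := hEpar; rw [hSapp] at this; simpa using this)
        (by have := hVpar; rw [hSapp] at this; exact this)
        hEeig hVeig
      simp only [inv_mul_cancel₀ hζ0, Bool.false_and, inv_inv,
        Bool.false_eq_true, if_false, reduceIte, one_mul, mul_one] at happ
      -- E * V = V * E
      have prod_term : ∀ k l : ℕ,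
          e ((π ^ k) i) * (h ^ l) x = (if (π ^ k) i = (π ^ l) i then (h ^ l) x else 0) ∧
          (h ^ l) x * e ((π ^ k) i) = (if (π ^ k) i = (π ^ l) i then (h ^ l) x else 0) := by
        intro k l
        obtain ⟨bl, hbl⟩ := hpow_single l i b
        rw [hbl]
        by_cases hkl : (π ^ k) i = (π ^ l) i
        · rw [if_pos hkl, hkl]
          exact ⟨(e_mul _ _).1, (e_mul _ _).2⟩
        · rw [if_neg hkl]
          exact ⟨mul_ne _ _ _ _ hkl, mul_ne _ _ _ _ (Ne.symm hkl)⟩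
      have hcomm : E * V = V * E := by
        rw [hE, hV, Finset.sum_mul_sum, Finset.sum_mul_sum, Finset.sum_comm]
        refine Finset.sum_congr rfl fun k _ => Finset.sum_congr rfl fun l _ => ?_
        rw [smul_mul_smul_comm, smul_mul_smul_comm, (prod_term l k).1, (prod_term l k).2,
          mul_comm (ζ ^ l)]
      rw [← hcomm] at happ
      -- f (E * V) = 0
      have hfEV : f (E * V) = 0 := by
        have hsub : (1 - ζ) * f (E * V) = 0 := by
          linear_combination happ
        rcases mul_eq_zero.mp hsub with h' | h'
        · exact absurd (by linear_combination -h' : ζ = 1) hζ1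
        · exact h'
      -- compute f (E * V)
      set c : ℕ := ((Finset.range N ×ˢ Finset.range N).filter
        (fun kl : ℕ × ℕ => (π ^ kl.1) i = (π ^ kl.2) i)).card with hc
      have hfEVc : f (E * V) = (c : ℂ) * f x := by
        rw [hE, hV, Finset.sum_mul_sum]
        rw [map_sum]
        have hterm : ∀ k ∈ Finset.range N, f (∑ l ∈ Finset.range N,
            (ζ ^ k • e ((π ^ k) i)) * ((ζ⁻¹) ^ l • (h ^ l) x)) =
            ∑ l ∈ Finset.range N, (if (π ^ k) i = (π ^ l) i then f x else 0) := by
          intro k _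
          rw [map_sum]
          refine Finset.sum_congr rfl fun l _ => ?_
          rw [smul_mul_smul_comm, (prod_term k l).1]
          by_cases hkl : (π ^ k) i = (π ^ l) i
          · rw [if_pos hkl, if_pos hkl, map_smul, smul_eq_mul, hcoef k l hkl, one_mul, fhpow]
          · rw [if_neg hkl, if_neg hkl, smul_zero, map_zero]
        rw [Finset.sum_congr rfl hterm]
        rw [← Finset.sum_product']
        rw [← Finset.sum_filter]
        rw [Finset.sum_const, nsmul_eq_mul, ← hc]
      have hc0 : c ≠ 0 := by
        rw [hc]
        refine Finset.card_ne_zero_of_mem (a := ((0 : ℕ), (0 : ℕ))) ?_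
        rw [Finset.mem_filter, Finset.mem_product]
        exact ⟨⟨Finset.mem_range.mpr hN0, Finset.mem_range.mpr hN0⟩, rfl⟩
      rw [hfEVc] at hfEV
      rcases mul_eq_zero.mp hfEV with h' | h'
      · exact absurd h' (Nat.cast_ne_zero.mpr hc0)
      · exact h'
    have hdec : a = (2⁻¹ : ℂ) • (a + σ i a) + (2⁻¹ : ℂ) • (a - σ i a) := by module
    have hp1 : σ i ((2⁻¹ : ℂ) • (a + σ i a)) = (2⁻¹ : ℂ) • (a + σ i a) := by
      rw [map_smul, map_add, hσ2, add_comm]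
    have hp2 : σ i ((2⁻¹ : ℂ) • (a - σ i a)) = -((2⁻¹ : ℂ) • (a - σ i a)) := by
      rw [map_smul, map_sub, hσ2]
      module
    calc f (Pi.single i a)
        = f (Pi.single i ((2⁻¹ : ℂ) • (a + σ i a))) +
          f (Pi.single i ((2⁻¹ : ℂ) • (a - σ i a))) := by
          rw [← map_add, ← Pi.single_add, ← hdec]
      _ = 0 := by
          rw [key _ false (by simpa using hp1), key _ true (by simpa using hp2), add_zero]
  refine ⟨vanish, ?_⟩
  intro a
  have ha : a = ∑ i, Pi.single i (a i) := (Finset.univ_sum_single a).symm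
  calc f a = ∑ i, f (Pi.single i (a i)) := by rw [← map_sum, ← ha]
    _ = ∑ i ∈ Finset.univ.filter (fun i => π i = i), f (Pi.single i (a i)) := by
        rw [Finset.sum_filter]
        refine Finset.sum_congr rfl fun i _ => ?_
        by_cases hπi : π i = i
        · rw [if_pos hπi]
        · rw [if_neg hπi, vanish i hπi]
end

section
/- Let f : A → ℂ be h-supersymmetric on a superalgebra A with finite-order automorphism h, let γ be an invertible even element of A with λ(γ) = 1 such that conjugation by γ implements h (i.e. γ^{-1} a γ = h(a)). Define f̄(a) = f(a γ^{-1}). Then f̄ satisfies f̄(ab) = δ_{λ(a)λ(b),1} (−1)^{p(a)p(b)} f̄(ba) for all h-eigenvectors a, b ∈ A. -/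
/-- Let `A` be a superalgebra (grading encoded by the parity involution `σA`) with a
finite-order automorphism `h`, implemented by conjugation by an invertible even element
`γ` fixed by `h` (so `λ(γ) = 1`): `γ⁻¹ a γ = h(a)`.  If `f : A → ℂ` is `h`-supersymmetric,
then `f̄(a) := f(a γ⁻¹)` satisfies `f̄(ab) = δ_{λ(a)λ(b),1} (-1)^{p(a)p(b)} f̄(ba)` for all
homogeneous `h`-eigenvectors `a, b`. -/
theorem hsupersymmetric_twist_by_gamma
    (A : Type*) [Ring A] [Algebra ℂ A]
    (σA : A ≃ₐ[ℂ] A) (hσA2 : ∀ a, σA (σA a) = a)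
    (h : A ≃ₐ[ℂ] A) (hEven : ∀ a, h (σA a) = σA (h a))
    (hOrd : ∃ N : ℕ, 0 < N ∧ ∀ a, (h ^ N) a = a)
    (γ : Aˣ) (hγeven : σA (γ : A) = (γ : A)) (hγfix : h (γ : A) = (γ : A))
    (hconj : ∀ a : A, (↑γ⁻¹ : A) * a * (γ : A) = h a)
    (f : A →ₗ[ℂ] ℂ)
    (hf : ∀ (a b : A) (pa pb : Bool) (la lb : ℂ),
      σA a = (if pa then -a else a) → σA b = (if pb then -b else b) →
      h a = la • a → h b = lb • b →
      f (a * b) = (if la * lb = 1 then 1 else 0) *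
        (if pa && pb then (-1 : ℂ) else 1) * la⁻¹ * f (b * a)) :
    ∀ (a b : A) (pa pb : Bool) (la lb : ℂ),
      σA a = (if pa then -a else a) → σA b = (if pb then -b else b) →
      h a = la • a → h b = lb • b →
      f (a * b * (↑γ⁻¹ : A)) = (if la * lb = 1 then 1 else 0) *
        (if pa && pb then (-1 : ℂ) else 1) * f (b * a * (↑γ⁻¹ : A)) := by

  intro a b pa pb la lb hpa hpb hla hlb
  have hγinv : h (↑γ⁻¹ : A) = (↑γ⁻¹ : A) := by
    have h1 : h (↑γ⁻¹ : A) * (γ : A) = 1 := by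
      rw [← hγfix, ← map_mul]; simp
    calc h (↑γ⁻¹ : A) = h (↑γ⁻¹ : A) * (γ : A) * (↑γ⁻¹ : A) := by
          rw [mul_assoc]; simp
      _ = (↑γ⁻¹ : A) := by rw [h1, one_mul]
  have hσinv : σA (↑γ⁻¹ : A) = (↑γ⁻¹ : A) := by
    have h1 : σA (↑γ⁻¹ : A) * (γ : A) = 1 := by
      rw [← hγeven, ← map_mul]; simp
    calc σA (↑γ⁻¹ : A) = σA (↑γ⁻¹ : A) * (γ : A) * (↑γ⁻¹ : A) := by
          rw [mul_assoc]; simp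
      _ = (↑γ⁻¹ : A) := by rw [h1, one_mul]
  by_cases ha0 : a = 0
  · simp [ha0]
  have hla0 : la ≠ 0 := by
    obtain ⟨N, hN, hfix⟩ := hOrd
    intro h0
    have hpow : ∀ n : ℕ, (h ^ n) a = la ^ n • a := by
      intro n
      induction n with
      | zero => simp
      | succ k ih =>
        rw [pow_succ, AlgEquiv.mul_apply, hla, map_smul, ih, smul_smul, pow_succ]
        ring_nf
    have := hpow N
    rw [hfix, h0, zero_pow hN.ne', zero_smul] at this
    exact ha0 this
  have hσb : σA (b * (↑γ⁻¹ : A)) = (if pb then -(b * (↑γ⁻¹ : A)) else b * (↑γ⁻¹ : A)) := by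
    rw [map_mul, hpb, hσinv]
    cases pb <;> simp [neg_mul]
  have hhb : h (b * (↑γ⁻¹ : A)) = lb • (b * (↑γ⁻¹ : A)) := by
    rw [map_mul, hlb, hγinv, smul_mul_assoc]
  have key := hf a (b * (↑γ⁻¹ : A)) pa pb la lb hpa hσb hla hhb
  have hswap : (b * (↑γ⁻¹ : A)) * a = la • (b * a * (↑γ⁻¹ : A)) := by
    have : (↑γ⁻¹ : A) * a = h a * (↑γ⁻¹ : A) := by
      calc (↑γ⁻¹ : A) * a = ((↑γ⁻¹ : A) * a * (γ : A)) * (↑γ⁻¹ : A) := by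
            rw [mul_assoc]; simp
        _ = h a * (↑γ⁻¹ : A) := by rw [hconj]
    rw [mul_assoc, this, hla, smul_mul_assoc, mul_smul_comm]
    rw [mul_assoc]
  rw [← mul_assoc] at key
  rw [key, hswap, map_smul, smul_eq_mul]
  field_simp
end
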